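/- arXiv:2007.05246 — 7 statements merged into one kernel-verified Lean document; each statement's English description precedes it below -/
import Mathlib

section
/- For every graph G, generalized threshold function τ, subset V_f ⊆ V(G), and positive integer k: there exists a target set S₀ ⊇ V_f with activation time t_τ(S₀) ≥ k if and only if there exists a target set S₀' ⊇ V_f with activation time t_τ(S₀') exactly equal to k. -/
namespace TSS

variable {V : Type*}

/-- The interval (one activation step): `S` together with all vertices having
at least `τ v` neighbors in `S`. -/
def interval (G : SimpleGraph V) (τ : V → ℕ) (S : Set V) : Set V :=
  S ∪ {v | τ v ≤ (G.neighborSet v ∩ S).ncard}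

/-- `S` is a target set if iterating the interval operator reaches all of `V`. -/
def IsTargetSet (G : SimpleGraph V) (τ : V → ℕ) (S : Set V) : Prop :=
  ∃ t : ℕ, (interval G τ)^[t] S = Set.univ

/-- The activation time of a set: least `t` with `I^[t+1] S = I^[t] S`. -/
noncomputable def actTime (G : SimpleGraph V) (τ : V → ℕ) (S : Set V) : ℕ :=
  sInf {t : ℕ | (interval G τ)^[t + 1] S = (interval G τ)^[t] S}

/-- The maximum activation time over all target sets. -/
noncomputable def maxTime (G : SimpleGraph V) (τ : V → ℕ) : ℕ :=
  sSup {t : ℕ | ∃ S : Set V, IsTargetSet G τ S ∧ actTime G τ S = t}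

/-- The activation time of a vertex `v` for an initial set `S`. -/
noncomputable def vTime (G : SimpleGraph V) (τ : V → ℕ) (S : Set V) (v : V) : ℕ :=
  sInf {k : ℕ | v ∈ (interval G τ)^[k] S}

/-- The set of vertices eventually activated from `S`. -/
def hull (G : SimpleGraph V) (τ : V → ℕ) (S : Set V) : Set V :=
  {v | ∃ k : ℕ, v ∈ (interval G τ)^[k] S}

end TSS

open TSS

section Aux

variable {V : Type*}

lemma subset_interval (G : SimpleGraph V) (τ : V → ℕ) (S : Set V) :
    S ⊆ interval G τ S := Set.subset_union_left

lemma iterate_subset_iterate_add (G : SimpleGraph V) (τ : V → ℕ) (S : Set V)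
    (a b : ℕ) : (interval G τ)^[a] S ⊆ (interval G τ)^[a + b] S := by
  induction b with
  | zero => rfl
  | succ n ih =>
      refine ih.trans ?_
      rw [show a + (n+1) = (a+n) + 1 by ring, Function.iterate_succ_apply']
      exact subset_interval _ _ _

lemma stab_nonempty [Fintype V] (G : SimpleGraph V) (τ : V → ℕ) (S : Set V) :
    {t : ℕ | (interval G τ)^[t + 1] S = (interval G τ)^[t] S}.Nonempty := by
  by_contra h
  rw [Set.not_nonempty_iff_eq_empty, Set.eq_empty_iff_forall_notMem] at h
  have hstrict : StrictMono (fun t => ((interval G τ)^[t] S).ncard) := by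
    apply strictMono_nat_of_lt_succ
    intro n
    have hsub : (interval G τ)^[n] S ⊆ (interval G τ)^[n + 1] S := by
      have := iterate_subset_iterate_add G τ S n 1
      simpa using this
    have hne : (interval G τ)^[n] S ≠ (interval G τ)^[n + 1] S := fun he => h n he.symm
    exact Set.ncard_lt_ncard (hsub.lt_of_ne hne) (Set.toFinite _)
  have h1 : Fintype.card V + 1 ≤ ((interval G τ)^[Fintype.card V + 1] S).ncard :=
    hstrict.le_apply
  have h2 : ((interval G τ)^[Fintype.card V + 1] S).ncard ≤ Fintype.card V :=
    Set.ncard_le_ncard (Set.subset_univ _) (Set.toFinite _) |>.trans (by rw [Set.ncard_univ, Nat.card_eq_fintype_card])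
  omega

lemma actTime_mem [Fintype V] (G : SimpleGraph V) (τ : V → ℕ) (S : Set V) :
    (interval G τ)^[actTime G τ S + 1] S = (interval G τ)^[actTime G τ S] S :=
  Nat.sInf_mem (stab_nonempty G τ S)

end Aux


/-- there is a target set containing V_f with activation time ≥ k iff
there is one with activation time exactly k. -/
theorem stmt1 {V : Type*} [Fintype V] (G : SimpleGraph V) (τ : V → ℕ)
    (Vf : Set V) (k : ℕ) (hk : 0 < k) :
    (∃ S₀ : Set V, Vf ⊆ S₀ ∧ TSS.IsTargetSet G τ S₀ ∧ k ≤ TSS.actTime G τ S₀) ↔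
    (∃ S₀ : Set V, Vf ⊆ S₀ ∧ TSS.IsTargetSet G τ S₀ ∧ TSS.actTime G τ S₀ = k) := by
  constructor
  · rintro ⟨S, hVf, hT, hk'⟩
    set t := actTime G τ S with ht
    refine ⟨(interval G τ)^[t - k] S, ?_, ?_, ?_⟩
    · exact hVf.trans (by simpa using iterate_subset_iterate_add G τ S 0 (t - k))
    · obtain ⟨m, hm⟩ := hT
      refine ⟨m, ?_⟩
      rw [← Function.iterate_add_apply]
      have := iterate_subset_iterate_add G τ S m (t - k)
      rw [hm] at this
      exact Set.eq_univ_of_univ_subset this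
    · have hmem : (t - k) + k = t := by omega
      have hk_mem : k ∈ {s : ℕ | (interval G τ)^[s + 1] ((interval G τ)^[t - k] S)
          = (interval G τ)^[s] ((interval G τ)^[t - k] S)} := by
        show (interval G τ)^[k + 1] ((interval G τ)^[t - k] S)
          = (interval G τ)^[k] ((interval G τ)^[t - k] S)
        rw [← Function.iterate_add_apply, ← Function.iterate_add_apply]
        rw [show k + 1 + (t - k) = t + 1 by omega, show k + (t - k) = t by omega]
        exact actTime_mem G τ S
      refine le_antisymm (Nat.sInf_le hk_mem) ?_
      have hne : {s : ℕ | (interval G τ)^[s + 1] ((interval G τ)^[t - k] S)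
          = (interval G τ)^[s] ((interval G τ)^[t - k] S)}.Nonempty := ⟨k, hk_mem⟩
      have hs := Nat.sInf_mem hne
      set s := sInf {s : ℕ | (interval G τ)^[s + 1] ((interval G τ)^[t - k] S)
          = (interval G τ)^[s] ((interval G τ)^[t - k] S)} with hsdef
      have hsA : s + (t - k) ∈ {u : ℕ | (interval G τ)^[u + 1] S = (interval G τ)^[u] S} := by
        show (interval G τ)^[s + (t - k) + 1] S = (interval G τ)^[s + (t - k)] S
        have h1 : (interval G τ)^[s + 1] ((interval G τ)^[t - k] S)
            = (interval G τ)^[s] ((interval G τ)^[t - k] S) := hs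
        rw [← Function.iterate_add_apply, ← Function.iterate_add_apply] at h1
        rw [show s + (t - k) + 1 = s + 1 + (t - k) by omega]
        exact h1
      have h2 : t ≤ s + (t - k) := Nat.sInf_le hsA
      show k ≤ s
      omega
  · rintro ⟨S, hVf, hT, heq⟩
    exact ⟨S, hVf, hT, heq.ge⟩
end

section
/- Let T be a tree with at least two vertices, τ a threshold function on T (i.e., 1 ≤ τ(x) ≤ deg(x) for all x), v a leaf of T, and w the unique neighbor of v. Then there exists a proper subset S ⊊ V(T) with v, w ∉ S such that I_τ(S) = S, and S ∪ {v} is a target set of T that activates w at time 1 (i.e., w ∈ I_τ(S ∪ {v})). -/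
open TSS

section Aux

variable {V : Type*}

/-- Membership in the constructed fixed set: `x` belongs if it is a chosen child of its
parent, or if its parent belongs. -/
inductive InS (v : V) (par : V → V) (C : V → Finset V) : V → Prop
  | chosen (x : V) (hx : x ≠ v) (h : x ∈ C (par x)) : InS v par C x
  | up (x : V) (hx : x ≠ v) (h : InS v par C (par x)) : InS v par C x

/-- In a tree, adjacent vertices have different distances from any vertex `v`. -/
lemma tree_adj_dist_ne {G : SimpleGraph V} (hT : G.IsTree) (v : V) {x z : V}
    (hadj : G.Adj x z) : G.dist v x ≠ G.dist v z := by
  classical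
  intro heq
  have hc := hT.isConnected
  have hxv : x ≠ v := by
    intro h
    subst h
    rw [SimpleGraph.dist_self] at heq
    exact hadj.ne ((hc.dist_eq_zero_iff).mp heq.symm)
  have hzv : z ≠ v := by
    intro h
    subst h
    rw [SimpleGraph.dist_self] at heq
    exact hadj.ne ((hc.dist_eq_zero_iff).mp heq).symm
  obtain ⟨Pz, hPz, hlz⟩ := hc.exists_path_of_dist z v
  obtain ⟨Px, hPx, hlx⟩ := hc.exists_path_of_dist x v
  have hxs : x ∉ Pz.support := by
    intro hmem
    have h2 := SimpleGraph.Walk.take_spec Pz hmem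
    have ht : 1 ≤ (Pz.takeUntil x hmem).length := by
      rcases Nat.eq_zero_or_pos (Pz.takeUntil x hmem).length with h0 | h
      · exact absurd (SimpleGraph.Walk.eq_of_length_eq_zero h0) hadj.ne'
      · exact h
    have hd : G.dist x v ≤ (Pz.dropUntil x hmem).length := SimpleGraph.dist_le _
    have hlen : (Pz.takeUntil x hmem).length + (Pz.dropUntil x hmem).length = Pz.length := by
      have := congrArg SimpleGraph.Walk.length h2
      rwa [SimpleGraph.Walk.length_append] at this
    have c1 : G.dist x v = G.dist v x := SimpleGraph.dist_comm ..
    have c2 : G.dist z v = G.dist v z := SimpleGraph.dist_comm ..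
    omega
  have e1 : (SimpleGraph.Walk.cons hadj Pz).IsPath := hPz.cons hxs
  have hequ := hT.IsAcyclic.path_unique ⟨SimpleGraph.Walk.cons hadj Pz, e1⟩ ⟨Px, hPx⟩
  have hlen := congrArg (fun P : G.Path x v => P.1.length) hequ
  simp only [SimpleGraph.Walk.length_cons] at hlen
  have c1 : G.dist x v = G.dist v x := SimpleGraph.dist_comm ..
  have c2 : G.dist z v = G.dist v z := SimpleGraph.dist_comm ..
  omega

/-- In a tree, every vertex `x ≠ v` has a unique neighbor strictly closer to `v`. -/
lemma tree_unique_parent {G : SimpleGraph V} (hT : G.IsTree) (v : V) {x : V} (hx : x ≠ v) :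
    ∃! p : V, G.Adj x p ∧ G.dist v p + 1 = G.dist v x := by
  classical
  have hc := hT.isConnected
  have hdpos : 0 < G.dist v x := hc.pos_dist_of_ne (Ne.symm hx)
  -- existence
  obtain ⟨P, hP, hlen⟩ := hc.exists_path_of_dist x v
  have c0 : G.dist x v = G.dist v x := SimpleGraph.dist_comm ..
  have key : ∀ p q : V, G.Adj x p → G.dist v p + 1 = G.dist v x →
      G.Adj x q → G.dist v q + 1 = G.dist v x → p = q := by
    intro p q hxp hdp hxq hdq
    obtain ⟨Pp, hPp, hlp⟩ := hc.exists_path_of_dist p v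
    obtain ⟨Pq, hPq, hlq⟩ := hc.exists_path_of_dist q v
    have hxsp : x ∉ Pp.support := by
      intro hmem
      have hd : G.dist x v ≤ (Pp.dropUntil x hmem).length := SimpleGraph.dist_le _
      have h2 : (Pp.dropUntil x hmem).length ≤ Pp.length :=
        SimpleGraph.Walk.length_dropUntil_le _ hmem
      have cp : G.dist p v = G.dist v p := SimpleGraph.dist_comm ..
      omega
    have hxsq : x ∉ Pq.support := by
      intro hmem
      have hd : G.dist x v ≤ (Pq.dropUntil x hmem).length := SimpleGraph.dist_le _
      have h2 : (Pq.dropUntil x hmem).length ≤ Pq.length :=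
        SimpleGraph.Walk.length_dropUntil_le _ hmem
      have cq : G.dist q v = G.dist v q := SimpleGraph.dist_comm ..
      omega
    have e1 : (SimpleGraph.Walk.cons hxp Pp).IsPath := hPp.cons hxsp
    have e2 : (SimpleGraph.Walk.cons hxq Pq).IsPath := hPq.cons hxsq
    have hequ := hT.IsAcyclic.path_unique ⟨SimpleGraph.Walk.cons hxp Pp, e1⟩
      ⟨SimpleGraph.Walk.cons hxq Pq, e2⟩
    have hsup := congrArg (fun P : G.Path x v => P.1.support) hequ
    simp only [SimpleGraph.Walk.support_cons] at hsup
    have hsup' : Pp.support = Pq.support := by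
      injection hsup
    have h1 : Pp.support.head? = some p := by
      rw [SimpleGraph.Walk.support_eq_cons]; rfl
    have h2 : Pq.support.head? = some q := by
      rw [SimpleGraph.Walk.support_eq_cons]; rfl
    rw [hsup', h2] at h1
    exact (Option.some_injective _ h1).symm
  cases P with
  | nil => exact absurd rfl hx
  | @cons _ p _ h q =>
    have hql : q.length + 1 = G.dist v x := by
      simpa [c0] using hlen
    have hd1 : G.dist v p ≤ q.length := by
      have : G.dist p v ≤ q.length := SimpleGraph.dist_le q
      rwa [SimpleGraph.dist_comm] at this
    have hd2 : G.dist v x ≤ G.dist v p + 1 := by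
      have htr : G.dist v x ≤ G.dist v p + G.dist p x := hc.dist_triangle
      have : G.dist p x ≤ 1 := by
        have := SimpleGraph.dist_le (SimpleGraph.Walk.cons h.symm SimpleGraph.Walk.nil)
        simpa using this
      omega
    have hdp : G.dist v p + 1 = G.dist v x := by omega
    exact ⟨p, ⟨h, hdp⟩, fun y hy => key y p hy.1 hy.2 h hdp⟩

end Aux

/-- in a tree with at least two vertices, threshold function τ,
a leaf v with unique neighbor w, there is S ⊊ V with v,w ∉ S, I(S)=S, and
S ∪ {v} a target set activating w at time 1. -/
theorem stmt5 {V : Type*} [Fintype V] (G : SimpleGraph V) (hT : G.IsTree)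
    (hcard : 2 ≤ Fintype.card V)
    (τ : V → ℕ) (hτ : ∀ x : V, 1 ≤ τ x ∧ τ x ≤ (G.neighborSet x).ncard)
    (v w : V) (hleaf : G.neighborSet v = {w}) :
    ∃ S : Set V, S ⊂ Set.univ ∧ v ∉ S ∧ w ∉ S ∧ TSS.interval G τ S = S ∧
      TSS.IsTargetSet G τ (S ∪ {v}) ∧ w ∈ TSS.interval G τ (S ∪ {v}) := by
  classical
  have hc := hT.isConnected
  have hadjvw : G.Adj v w := by
    have : w ∈ G.neighborSet v := by rw [hleaf]; exact Set.mem_singleton w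
    exact this
  have hwv : w ≠ v := hadjvw.ne'
  -- the parent function
  have hex : ∀ x : V, ∃ p : V, x ≠ v →
      G.Adj x p ∧ G.dist v p + 1 = G.dist v x ∧
      ∀ q, G.Adj x q → G.dist v q + 1 = G.dist v x → q = p := by
    intro x
    by_cases hx : x = v
    · exact ⟨v, fun h => absurd hx h⟩
    · obtain ⟨p, hp, huniq⟩ := tree_unique_parent hT v hx
      exact ⟨p, fun _ => ⟨hp.1, hp.2, fun q h1 h2 => huniq q ⟨h1, h2⟩⟩⟩
  choose par hpar using hex
  -- children facts
  have hchild : ∀ x z : V, x ≠ v → G.Adj x z → z ≠ par x →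
      z ≠ v ∧ par z = x ∧ G.dist v z = G.dist v x + 1 := by
    intro x z hx hadj hzp
    have hne := tree_adj_dist_ne hT v hadj
    have hd1 : G.dist v z ≤ G.dist v x + 1 := by
      have htr : G.dist v z ≤ G.dist v x + G.dist x z := hc.dist_triangle
      have : G.dist x z ≤ 1 := by
        have := SimpleGraph.dist_le (SimpleGraph.Walk.cons hadj SimpleGraph.Walk.nil)
        simpa using this
      omega
    have hd2 : G.dist v x ≤ G.dist v z + 1 := by
      have htr : G.dist v x ≤ G.dist v z + G.dist z x := hc.dist_triangle
      have : G.dist z x ≤ 1 := by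
        have := SimpleGraph.dist_le (SimpleGraph.Walk.cons hadj.symm SimpleGraph.Walk.nil)
        simpa using this
      omega
    have hnpar : ¬ (G.dist v z + 1 = G.dist v x) := by
      intro h
      exact hzp ((hpar x hx).2.2 z hadj h)
    have hdz : G.dist v z = G.dist v x + 1 := by omega
    have hdxpos : 0 < G.dist v x := hc.pos_dist_of_ne (Ne.symm hx)
    have hzv : z ≠ v := by
      intro h
      rw [h, SimpleGraph.dist_self] at hdz
      omega
    refine ⟨hzv, ((hpar z hzv).2.2 x hadj.symm (by omega)).symm, hdz⟩
  -- choose children sets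
  have hCex : ∀ x : V, ∃ t : Finset V,
      t ⊆ (G.neighborFinset x).erase (par x) ∧ (x ≠ v → t.card = τ x - 1) ∧
      (x = v → t = ∅) := by
    intro x
    by_cases hx : x = v
    · exact ⟨∅, Finset.empty_subset _, fun h => absurd hx h, fun _ => rfl⟩
    · have hdeg : τ x ≤ (G.neighborFinset x).card := by
        have h2 := (hτ x).2
        rwa [SimpleGraph.neighborFinset_def, ← Set.ncard_eq_toFinset_card']
      have hparm : par x ∈ G.neighborFinset x :=
        (SimpleGraph.mem_neighborFinset ..).mpr (hpar x hx).1
      have hcard' : τ x - 1 ≤ ((G.neighborFinset x).erase (par x)).card := by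
        rw [Finset.card_erase_of_mem hparm]
        omega
      obtain ⟨t, ht1, ht2⟩ := Finset.exists_subset_card_eq hcard'
      exact ⟨t, ht1, fun _ => ht2, fun h => absurd h hx⟩
  choose C hCsub hCcard hCv using hCex
  -- the set S
  set S : Set V := {x | InS v par C x} with hSdef
  have hvS : v ∉ S := by
    intro h
    cases h with
    | chosen _ hx _ => exact hx rfl
    | up _ hx _ => exact hx rfl
  have hparw : par w = v := by
    have hdw : G.dist v w = 1 := by
      have h1 : G.dist v w ≤ 1 := by
        have := SimpleGraph.dist_le (SimpleGraph.Walk.cons hadjvw SimpleGraph.Walk.nil)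
        simpa using this
      have h2 : 0 < G.dist v w := hc.pos_dist_of_ne (Ne.symm hwv)
      omega
    have := (hpar w hwv).2.1
    rw [hdw] at this
    have hd0 : G.dist v (par w) = 0 := by omega
    exact ((hc.dist_eq_zero_iff).mp hd0).symm
  have hwS : w ∉ S := by
    intro h
    cases h with
    | chosen _ hx hmem =>
      rw [hparw, hCv v rfl] at hmem
      exact absurd hmem (Finset.notMem_empty w)
    | up _ hx hmem => rw [hparw] at hmem; exact hvS hmem
  -- chosen children are in S
  have hCS : ∀ x : V, x ≠ v → ∀ z ∈ C x, z ∈ S ∧ G.Adj x z ∧ z ≠ par x := by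
    intro x hx z hz
    have hz' := hCsub x hz
    have hzne : z ≠ par x := Finset.ne_of_mem_erase hz'
    have hadj : G.Adj x z := (SimpleGraph.mem_neighborFinset ..).mp
      (Finset.mem_of_mem_erase hz')
    obtain ⟨hzv, hpz, _⟩ := hchild x z hx hadj hzne
    exact ⟨InS.chosen z hzv (by rwa [hpz]), hadj, hzne⟩
  -- S is a fixed point
  have hSfix : TSS.interval G τ S = S := by
    rw [TSS.interval, Set.union_eq_left]
    intro x hxmem
    by_contra hxS
    by_cases hx : x = v
    · subst hx
      have hempty : G.neighborSet x ∩ S = ∅ := by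
        rw [hleaf]
        ext y
        simp only [Set.mem_inter_iff, Set.mem_singleton_iff, Set.mem_empty_iff_false,
          iff_false, not_and]
        rintro rfl
        exact hwS
      simp only [Set.mem_setOf_eq] at hxmem
      rw [hempty, Set.ncard_empty] at hxmem
      have := (hτ x).1
      omega
    · have hsub : G.neighborSet x ∩ S ⊆ ↑(C x) := by
        intro z hz
        obtain ⟨hz1, hz2⟩ := hz
        by_cases hzp : z = par x
        · exfalso
          exact hxS (InS.up x hx (by rwa [← hzp]))
        · obtain ⟨hzv, hpz, _⟩ := hchild x z hx hz1 hzp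
          cases hz2 with
          | chosen _ _ hmem => rw [hpz] at hmem; exact hmem
          | up _ _ hmem => rw [hpz] at hmem; exact absurd hmem hxS
      have hle : (G.neighborSet x ∩ S).ncard ≤ (C x).card := by
        rw [← Set.ncard_coe_finset]
        exact Set.ncard_le_ncard hsub (Set.toFinite _)
      have := hCcard x hx
      have h1 := (hτ x).1
      simp only [Set.mem_setOf_eq] at hxmem
      omega
  -- monotonicity of iterates
  have hstep : ∀ (A : Set V), A ⊆ TSS.interval G τ A := fun A => Set.subset_union_left
  have hiter : ∀ n : ℕ, (TSS.interval G τ)^[n] (S ∪ {v}) ⊆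
      (TSS.interval G τ)^[n + 1] (S ∪ {v}) := by
    intro n
    rw [Function.iterate_succ_apply']
    exact hstep _
  have hbase : ∀ n : ℕ, S ∪ {v} ⊆ (TSS.interval G τ)^[n] (S ∪ {v}) := by
    intro n
    induction n with
    | zero => exact subset_rfl
    | succ n ih => exact ih.trans (hiter n)
  -- activation by distance
  have hact : ∀ n : ℕ, ∀ x : V, G.dist v x ≤ n →
      x ∈ (TSS.interval G τ)^[n] (S ∪ {v}) := by
    intro n
    induction n with
    | zero =>
      intro x hx
      have : G.dist v x = 0 := Nat.le_zero.mp hx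
      have hxv : x = v := ((hc.dist_eq_zero_iff).mp this).symm
      subst hxv
      exact Or.inr rfl
    | succ n ih =>
      intro x hx
      by_cases hxv : x = v
      · exact hbase (n + 1) (Or.inr hxv)
      by_cases hxS : x ∈ S
      · exact hbase (n + 1) (Or.inl hxS)
      by_cases hdn : G.dist v x ≤ n
      · exact hiter n (ih x hdn)
      · have hdx : G.dist v x = n + 1 := by omega
        have hparadj := (hpar x hxv).1
        have hpard : G.dist v (par x) ≤ n := by
          have := (hpar x hxv).2.1
          omega
        have hparnotC : par x ∉ C x := by
          intro h
          exact (Finset.ne_of_mem_erase (hCsub x h)) rfl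
        have hsub : ↑(insert (par x) (C x)) ⊆
            G.neighborSet x ∩ (TSS.interval G τ)^[n] (S ∪ {v}) := by
          intro z hz
          simp only [Finset.coe_insert, Set.mem_insert_iff, Finset.mem_coe] at hz
          rcases hz with rfl | hz
          · exact ⟨hparadj, ih _ hpard⟩
          · obtain ⟨hzS, hadj, _⟩ := hCS x hxv z hz
            exact ⟨hadj, hbase n (Or.inl hzS)⟩
        have hcardi : (insert (par x) (C x)).card = τ x := by
          rw [Finset.card_insert_of_notMem hparnotC, hCcard x hxv]
          have := (hτ x).1
          omega
        have hτle : τ x ≤ (G.neighborSet x ∩ (TSS.interval G τ)^[n] (S ∪ {v})).ncard := by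
          rw [← hcardi, ← Set.ncard_coe_finset]
          exact Set.ncard_le_ncard hsub (Set.toFinite _)
        rw [Function.iterate_succ_apply']
        exact Or.inr hτle
  -- w activates at time 1
  have hw1 : w ∈ TSS.interval G τ (S ∪ {v}) := by
    have hvnotC : v ∉ C w := by
      intro h
      have := Finset.ne_of_mem_erase (hCsub w h)
      rw [hparw] at this
      exact this rfl
    have hsub : ↑(insert v (C w)) ⊆ G.neighborSet w ∩ (S ∪ {v}) := by
      intro z hz
      simp only [Finset.coe_insert, Set.mem_insert_iff, Finset.mem_coe] at hz
      rcases hz with rfl | hz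
      · exact ⟨hadjvw.symm, Or.inr rfl⟩
      · obtain ⟨hzS, hadj, _⟩ := hCS w hwv z hz
        exact ⟨hadj, Or.inl hzS⟩
    have hcardi : (insert v (C w)).card = τ w := by
      rw [Finset.card_insert_of_notMem hvnotC, hCcard w hwv]
      have := (hτ w).1
      omega
    refine Or.inr ?_
    show τ w ≤ (G.neighborSet w ∩ (S ∪ {v})).ncard
    rw [← hcardi, ← Set.ncard_coe_finset]
    exact Set.ncard_le_ncard hsub (Set.toFinite _)
  refine ⟨S, ?_, hvS, hwS, hSfix, ⟨Fintype.card V, ?_⟩, hw1⟩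
  · rw [Set.ssubset_univ_iff]
    intro h
    exact hvS (h ▸ Set.mem_univ v)
  · ext x
    simp only [Set.mem_univ, iff_true]
    apply hact
    obtain ⟨P, hP, hl⟩ := hc.exists_path_of_dist v x
    have := hP.length_lt
    omega
end

section
/- Let T be a tree with at least two vertices and τ a threshold function on T. For any path P = (v₀, v₁, …, v_p) in T with p ≥ 1 such that v₀ is a leaf and every internal vertex v_i (0 < i < p) satisfies τ(v_i) < deg(v_i), there exists a target set S_P of T containing v₀ such that for every i ∈ {1, …, p}, vertex v_i is activated at time exactly i (i.e., v_i ∈ I_τ^i(S_P) \ I_τ^{i−1}(S_P)). -/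
open TSS

open TSS SimpleGraph Walk

section TreeAux

variable {V : Type*} [DecidableEq V] {G : SimpleGraph V}

lemma tree_path_length (hT : G.IsTree) {a b : V} (p : G.Walk a b) (hp : p.IsPath) :
    p.length = G.dist a b := by
  obtain ⟨q, hq, hql⟩ := hT.isConnected.exists_path_of_dist a b
  have h := hT.IsAcyclic.path_unique ⟨p, hp⟩ ⟨q, hq⟩
  rw [← hql]
  exact congrArg Walk.length (congrArg Subtype.val h)

lemma dist_le_of_mem_support {a b v : V} (p : G.Walk a b) (h : v ∈ p.support) :
    G.dist v b ≤ p.length :=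
  le_trans (SimpleGraph.dist_le (p.dropUntil v h)) (p.length_dropUntil_le h)

lemma dist_lt_of_mem_support {a b v : V} (p : G.Walk a b) (h : v ∈ p.support)
    (hva : v ≠ a) : G.dist v b + 1 ≤ p.length := by
  have hlen : (p.takeUntil v h).length + (p.dropUntil v h).length = p.length := by
    rw [← Walk.length_append, p.take_spec h]
  have h1 : (p.takeUntil v h).length ≠ 0 := fun h0 => hva (Walk.eq_of_length_eq_zero h0).symm
  have h2 := SimpleGraph.dist_le (p.dropUntil v h)
  omega

lemma adj_dist_ne (hT : G.IsTree) (r : V) {u v : V} (h : G.Adj u v) :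
    G.dist u r ≠ G.dist v r := by
  intro he
  obtain ⟨P, hP, hPl⟩ := hT.isConnected.exists_path_of_dist u r
  by_cases hv : v ∈ P.support
  · have := dist_lt_of_mem_support P hv h.ne'
    omega
  · have hcons : (Walk.cons h.symm P).IsPath := hP.cons hv
    have hlen := tree_path_length hT _ hcons
    rw [Walk.length_cons, hPl] at hlen
    omega

lemma exists_parent (hT : G.IsTree) {r v : V} (hv : v ≠ r) :
    ∃ u : V, G.Adj v u ∧ G.dist u r + 1 = G.dist v r := by
  obtain ⟨P, hP, hPl⟩ := hT.isConnected.exists_path_of_dist v r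
  cases P with
  | nil => exact absurd rfl hv
  | @cons _ u _ h q =>
      refine ⟨u, h, ?_⟩
      have hq := tree_path_length hT q hP.of_cons
      rw [Walk.length_cons] at hPl
      omega

lemma parent_unique (hT : G.IsTree) {r v u₁ u₂ : V}
    (h1 : G.Adj v u₁) (hd1 : G.dist u₁ r + 1 = G.dist v r)
    (h2 : G.Adj v u₂) (hd2 : G.dist u₂ r + 1 = G.dist v r) : u₁ = u₂ := by
  obtain ⟨Q₁, hQ1, hl1⟩ := hT.isConnected.exists_path_of_dist u₁ r
  obtain ⟨Q₂, hQ2, hl2⟩ := hT.isConnected.exists_path_of_dist u₂ r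
  have hv1 : v ∉ Q₁.support := fun hm => by
    have := dist_le_of_mem_support Q₁ hm; omega
  have hv2 : v ∉ Q₂.support := fun hm => by
    have := dist_le_of_mem_support Q₂ hm; omega
  have hp1 : (Walk.cons h1 Q₁).IsPath := hQ1.cons hv1
  have hp2 : (Walk.cons h2 Q₂).IsPath := hQ2.cons hv2
  have heq := hT.IsAcyclic.path_unique ⟨Walk.cons h1 Q₁, hp1⟩ ⟨Walk.cons h2 Q₂, hp2⟩
  have hsup := congrArg (fun w => Walk.support w.val) heq
  simp only [Walk.support_cons] at hsup
  rw [Q₁.support_eq_cons, Q₂.support_eq_cons] at hsup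
  simp only [List.cons.injEq] at hsup
  exact hsup.2.1

end TreeAux

open Classical in
noncomputable def fRec {V : Type*} (par : V → V) (s1 : V) (kids : V → Set V) : ℕ → V → ℕ
  | 0, _ => 0
  | n + 1, v =>
    if v = s1 then 1
    else if fRec par s1 kids n (par v) ≠ 0 ∧ v ∈ kids (par v) then
      fRec par s1 kids n (par v) + 1
    else 0

lemma iterate_interval_eq {V : Type*} (G : SimpleGraph V) (τ : V → ℕ) (f : V → ℕ)
    (H1 : ∀ v k, f v = k + 1 → τ v ≤ (G.neighborSet v ∩ {u | f u ≤ k}).ncard)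
    (H2 : ∀ v k, k + 2 ≤ f v → (G.neighborSet v ∩ {u | f u ≤ k}).ncard < τ v) :
    ∀ t, (interval G τ)^[t] {v | f v = 0} = {v | f v ≤ t} := by
  intro t
  induction t with
  | zero => simp [Nat.le_zero]
  | succ t ih =>
    rw [Function.iterate_succ_apply', ih]
    ext v
    simp only [interval, Set.mem_union, Set.mem_setOf_eq]
    constructor
    · rintro (h | h)
      · omega
      · by_contra hc
        have := H2 v t (by omega)
        omega
    · intro h
      rcases Nat.lt_or_ge (f v) (t + 1) with h' | h'
      · left; omega
      · right; exact H1 v t (by omega)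

/-- for a path v₀,…,v_p in a tree with v₀ a leaf and all internal
vertices non-saturated, there is a target set containing v₀ activating each vᵢ
at time exactly i. -/
theorem stmt6 {V : Type*} [Fintype V] (G : SimpleGraph V) (hT : G.IsTree)
    (hcard : 2 ≤ Fintype.card V)
    (τ : V → ℕ) (hτ : ∀ x : V, 1 ≤ τ x ∧ τ x ≤ (G.neighborSet x).ncard)
    (p : ℕ) (hp : 1 ≤ p) (vs : ℕ → V)
    (hinj : ∀ i ≤ p, ∀ j ≤ p, vs i = vs j → i = j)
    (hadj : ∀ i < p, G.Adj (vs i) (vs (i + 1)))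
    (hleaf : (G.neighborSet (vs 0)).ncard = 1)
    (hns : ∀ i : ℕ, 0 < i → i < p → τ (vs i) < (G.neighborSet (vs i)).ncard) :
    ∃ S : Set V, TSS.IsTargetSet G τ S ∧ vs 0 ∈ S ∧
      ∀ i : ℕ, 1 ≤ i → i ≤ p →
        vs i ∈ (TSS.interval G τ)^[i] S \ (TSS.interval G τ)^[i - 1] S := by
  classical
  have hconn := hT.isConnected
  -- basic distance facts
  have hdzero : ∀ v : V, G.dist v (vs 0) = 0 ↔ v = vs 0 := fun v => hconn.dist_eq_zero_iff
  have hdself : G.dist (vs 0) (vs 0) = 0 := SimpleGraph.dist_self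
  -- parent function
  have hex : ∀ v : V, ∃ u : V, v ≠ vs 0 → (G.Adj v u ∧ G.dist u (vs 0) + 1 = G.dist v (vs 0)) := by
    intro v
    by_cases h : v = vs 0
    · exact ⟨v, fun hc => absurd h hc⟩
    · obtain ⟨u, hu⟩ := exists_parent hT h
      exact ⟨u, fun _ => hu⟩
  choose par hpar using hex
  have hparu : ∀ v : V, v ≠ vs 0 → ∀ u : V, G.Adj v u →
      G.dist u (vs 0) + 1 = G.dist v (vs 0) → u = par v := fun v hv u hu hdu =>
    parent_unique hT hu hdu (hpar v hv).1 (hpar v hv).2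
  -- distance classification for neighbors
  have hcases : ∀ v u : V, G.Adj v u →
      G.dist u (vs 0) + 1 = G.dist v (vs 0) ∨ G.dist u (vs 0) = G.dist v (vs 0) + 1 := by
    intro v u h
    have hne : G.dist v (vs 0) ≠ G.dist u (vs 0) := adj_dist_ne hT (vs 0) h
    have h1 : G.dist u (vs 0) ≤ G.dist u v + G.dist v (vs 0) := hconn.dist_triangle
    have h2 : G.dist v (vs 0) ≤ G.dist v u + G.dist u (vs 0) := hconn.dist_triangle
    have h3 : G.dist u v = 1 := SimpleGraph.dist_eq_one_iff_adj.mpr h.symm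
    have h4 : G.dist v u = 1 := SimpleGraph.dist_eq_one_iff_adj.mpr h
    omega
  -- children
  set C : V → Set V := fun v => {c | G.Adj v c ∧ G.dist c (vs 0) = G.dist v (vs 0) + 1}
    with hCdef
  have hCN : ∀ v : V, C v ⊆ G.neighborSet v := fun v c hc => hc.1
  have hclass : ∀ v u : V, G.Adj v u → u ∈ C v ∨ (v ≠ vs 0 ∧ u = par v) := by
    intro v u h
    rcases hcases v u h with h' | h'
    · right
      have hv : v ≠ vs 0 := by
        intro hv; rw [hv, hdself] at h'; omega
      exact ⟨hv, hparu v hv u h h'⟩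
    · exact Or.inl ⟨h, h'⟩
  have hparnotC : ∀ v : V, v ≠ vs 0 → par v ∉ C v := by
    intro v hv hmem
    have := (hpar v hv).2
    have := hmem.2
    omega
  have hNeq : ∀ v : V, v ≠ vs 0 → G.neighborSet v = insert (par v) (C v) := by
    intro v hv
    apply Set.Subset.antisymm
    · intro u hu
      rcases hclass v u hu with h | ⟨_, rfl⟩
      · exact Set.mem_insert_of_mem _ h
      · exact Set.mem_insert _ _
    · rw [Set.insert_subset_iff]
      exact ⟨(hpar v hv).1, hCN v⟩
  have hNr : G.neighborSet (vs 0) ⊆ C (vs 0) := by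
    intro u hu
    rcases hclass (vs 0) u hu with h | ⟨hc, _⟩
    · exact h
    · exact absurd rfl hc
  have hcardC : ∀ v : V, v ≠ vs 0 → (C v).ncard + 1 = (G.neighborSet v).ncard := by
    intro v hv
    rw [hNeq v hv, Set.ncard_insert_of_notMem (hparnotC v hv)]
  -- the path realizes distances
  have hwalk : ∀ i : ℕ, i ≤ p → ∃ w : G.Walk (vs i) (vs 0),
      w.IsPath ∧ w.length = i ∧ ∀ x ∈ w.support, ∃ j, j ≤ i ∧ x = vs j := by
    intro i
    induction i with
    | zero =>
      intro _
      refine ⟨SimpleGraph.Walk.nil, by simp, by simp, ?_⟩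
      intro x hx
      simp only [SimpleGraph.Walk.support_nil, List.mem_singleton] at hx
      exact ⟨0, le_refl 0, hx⟩
    | succ i ih =>
      intro hip
      obtain ⟨w, hwp, hwl, hws⟩ := ih (by omega)
      have hadji : G.Adj (vs (i + 1)) (vs i) := (hadj i (by omega)).symm
      have hnot : vs (i + 1) ∉ w.support := by
        intro hm
        obtain ⟨j, hj, he⟩ := hws _ hm
        have := hinj (i + 1) hip j (by omega) he
        omega
      refine ⟨SimpleGraph.Walk.cons hadji w, hwp.cons hnot, by simp [hwl], ?_⟩
      intro x hx
      rw [SimpleGraph.Walk.support_cons, List.mem_cons] at hx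
      rcases hx with rfl | hx
      · exact ⟨i + 1, le_refl _, rfl⟩
      · obtain ⟨j, hj, he⟩ := hws _ hx
        exact ⟨j, by omega, he⟩
  have hdvs : ∀ i : ℕ, i ≤ p → G.dist (vs i) (vs 0) = i := by
    intro i hi
    obtain ⟨w, hwp, hwl, _⟩ := hwalk i hi
    rw [← tree_path_length hT w hwp, hwl]
  -- choice of non-designated children
  have hNdex : ∀ u : V, ∃ ND : Set V, ND ⊆ C u ∧ ND.ncard = τ u - 1 ∧
      ∀ i : ℕ, 1 ≤ i → i < p → u = vs i → vs (i + 1) ∉ ND := by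
    intro u
    by_cases hu : ∃ i : ℕ, 1 ≤ i ∧ i < p ∧ u = vs i
    · obtain ⟨i, hi1, hip, hui⟩ := hu
      have hune : u ≠ vs 0 := by
        rw [hui]; intro h
        have := hinj i (by omega) 0 (by omega) h
        omega
      have hvmem : vs (i + 1) ∈ C u := by
        rw [hui]
        exact ⟨hadj i hip, by rw [hdvs i (by omega), hdvs (i + 1) (by omega)]⟩
      have hCu : τ u ≤ (C u).ncard := by
        have h1 := hns i hi1 hip
        have h2 := hcardC u hune
        rw [← hui] at h1
        omega
      have hsub : τ u - 1 ≤ (C u \ {vs (i + 1)}).ncard := by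
        rw [Set.ncard_diff_singleton_of_mem hvmem]
        omega
      obtain ⟨ND, hND1, hND2⟩ := Set.exists_subset_card_eq hsub
      refine ⟨ND, fun x hx => (hND1 hx).1, hND2, ?_⟩
      intro j hj1 hjp huj
      have hji : j = i := by
        apply hinj j (by omega) i (by omega)
        rw [← huj, ← hui]
      subst hji
      intro hmem
      exact (hND1 hmem).2 rfl
    · have hCu : τ u - 1 ≤ (C u).ncard := by
        by_cases hur : u = vs 0
        · have h1 : (G.neighborSet u).ncard ≤ (C u).ncard := by
            rw [hur]
            exact Set.ncard_le_ncard hNr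
          have := (hτ u).2
          omega
        · have := hcardC u hur
          have := (hτ u).2
          omega
      obtain ⟨ND, hND1, hND2⟩ := Set.exists_subset_card_eq hCu
      exact ⟨ND, hND1, hND2, fun i hi1 hip hui => absurd ⟨i, hi1, hip, hui⟩ hu⟩
  choose Nd hNdC hNdcard hNdpath using hNdex
  set K : V → Set V := fun u => C u \ Nd u with hKdef
  -- the time function
  set f : V → ℕ := fun v => fRec par (vs 1) K (G.dist v (vs 0)) v with hfdef
  have hf0 : f (vs 0) = 0 := by
    show fRec par (vs 1) K (G.dist (vs 0) (vs 0)) (vs 0) = 0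
    rw [hdself]
    rfl
  have hvs1ne : vs 1 ≠ vs 0 := by
    intro h
    have := hinj 1 hp 0 (by omega) h
    omega
  have hstep : ∀ v : V, v ≠ vs 0 →
      f v = if v = vs 1 then 1
        else if f (par v) ≠ 0 ∧ v ∈ K (par v) then f (par v) + 1 else 0 := by
    intro v hv
    have hd0 : G.dist v (vs 0) ≠ 0 := fun h => hv ((hdzero v).mp h)
    obtain ⟨m, hm⟩ : ∃ m, G.dist v (vs 0) = m + 1 := ⟨G.dist v (vs 0) - 1, by omega⟩
    have hdp : G.dist (par v) (vs 0) = m := by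
      have := (hpar v hv).2
      omega
    have hfp : fRec par (vs 1) K m (par v) = f (par v) := by
      show _ = fRec par (vs 1) K (G.dist (par v) (vs 0)) (par v)
      rw [hdp]
    have h1 : f v = fRec par (vs 1) K (m + 1) v :=
      congrArg (fun n => fRec par (vs 1) K n v) hm
    rw [h1]
    simp only [fRec, hfp]
  have hfvs1 : f (vs 1) = 1 := by
    rw [hstep (vs 1) hvs1ne, if_pos rfl]
  have hpar1 : par (vs 1) = vs 0 :=
    (hparu (vs 1) hvs1ne (vs 0) (hadj 0 (by omega)).symm
      (by rw [hdself, hdvs 1 (by omega)])).symm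
  have hCne0 : ∀ v c : V, c ∈ C v → c ≠ vs 0 := by
    intro v c hc h
    have := hc.2
    rw [h, hdself] at this
    omega
  have hkid_par : ∀ v c : V, c ∈ C v → par c = v := by
    intro v c hc
    exact (hparu c (hCne0 v c hc) v hc.1.symm (by have := hc.2; omega)).symm
  have hkid_ne1 : ∀ v c : V, v ≠ vs 0 → c ∈ C v → c ≠ vs 1 := by
    intro v c hv hc h
    subst h
    rw [hkid_par v _ hc] at hpar1
    exact hv hpar1
  have hfNd : ∀ v : V, v ≠ vs 0 → ∀ c ∈ Nd v, f c = 0 := by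
    intro v hv c hc
    have hcC : c ∈ C v := hNdC v hc
    rw [hstep c (hCne0 v c hcC), if_neg (hkid_ne1 v c hv hcC), if_neg]
    rintro ⟨-, hk⟩
    rw [hkid_par v c hcC] at hk
    exact hk.2 hc
  have hfkid : ∀ v : V, f v ≠ 0 → ∀ c ∈ K v, f c = f v + 1 := by
    intro v hfv c hc
    have hvne : v ≠ vs 0 := fun h => hfv (h ▸ hf0)
    have hcC : c ∈ C v := hc.1
    have hpc : par c = v := hkid_par v c hcC
    rw [hstep c (hCne0 v c hcC), if_neg (hkid_ne1 v c hvne hcC),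
      if_pos ⟨by rw [hpc]; exact hfv, by rw [hpc]; exact hc⟩, hpc]
  have hfpar : ∀ v : V, f v ≠ 0 → v ≠ vs 0 ∧ f v = f (par v) + 1 := by
    intro v hfv
    have hvne : v ≠ vs 0 := fun h => hfv (h ▸ hf0)
    refine ⟨hvne, ?_⟩
    rw [hstep v hvne] at hfv ⊢
    by_cases h1 : v = vs 1
    · rw [if_pos h1]
      rw [h1, hpar1, hf0]
    · rw [if_neg h1] at hfv ⊢
      by_cases h2 : f (par v) ≠ 0 ∧ v ∈ K (par v)
      · rw [if_pos h2]
      · rw [if_neg h2] at hfv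
        exact absurd rfl hfv
  have hfvsi : ∀ i : ℕ, i ≤ p → f (vs i) = i := by
    intro i
    induction i with
    | zero => intro _; exact hf0
    | succ i ih =>
      intro hip
      by_cases hi0 : i = 0
      · subst hi0; exact hfvs1
      · have hfi : f (vs i) = i := ih (by omega)
        have hne0 : vs (i + 1) ≠ vs 0 := by
          intro h
          have := hinj (i + 1) hip 0 (by omega) h
          omega
        have hne1 : vs (i + 1) ≠ vs 1 := by
          intro h
          have := hinj (i + 1) hip 1 (by omega) h
          omega
        have hparvi : par (vs (i + 1)) = vs i :=
          (hparu (vs (i + 1)) hne0 (vs i) (hadj i (by omega)).symm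
            (by rw [hdvs i (by omega), hdvs (i + 1) (by omega)])).symm
        have hmemK : vs (i + 1) ∈ K (vs i) := by
          refine ⟨⟨hadj i (by omega), by rw [hdvs i (by omega), hdvs (i + 1) (by omega)]⟩, ?_⟩
          exact hNdpath (vs i) i (by omega) (by omega) rfl
        rw [hstep _ hne0, if_neg hne1,
          if_pos ⟨by rw [hparvi, hfi]; omega, by rw [hparvi]; exact hmemK⟩, hparvi, hfi]
  -- hypotheses of the engine lemma
  have H1 : ∀ v k, f v = k + 1 → τ v ≤ (G.neighborSet v ∩ {u | f u ≤ k}).ncard := by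
    intro v k hfv
    obtain ⟨hvne, hstep'⟩ := hfpar v (by omega)
    have hfp : f (par v) = k := by omega
    have hsub : insert (par v) (Nd v) ⊆ G.neighborSet v ∩ {u | f u ≤ k} := by
      intro x hx
      rcases Set.mem_insert_iff.mp hx with rfl | hx
      · exact ⟨(hpar v hvne).1, by simp only [Set.mem_setOf_eq]; omega⟩
      · refine ⟨hCN v (hNdC v hx), ?_⟩
        simp only [Set.mem_setOf_eq, hfNd v hvne x hx]
        omega
    have hτ1 := (hτ v).1
    have hcard : (insert (par v) (Nd v)).ncard = τ v := by
      rw [Set.ncard_insert_of_notMem (fun hmem => hparnotC v hvne (hNdC v hmem)),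
        hNdcard v]
      omega
    rw [← hcard]
    exact Set.ncard_le_ncard hsub (Set.toFinite _)
  have H2 : ∀ v k, k + 2 ≤ f v → (G.neighborSet v ∩ {u | f u ≤ k}).ncard < τ v := by
    intro v k hk
    obtain ⟨hvne, hstep'⟩ := hfpar v (by omega)
    have hsub : G.neighborSet v ∩ {u | f u ≤ k} ⊆ Nd v := by
      rintro x ⟨hxN, hxf⟩
      simp only [Set.mem_setOf_eq] at hxf
      rcases hclass v x hxN with hC | ⟨-, rfl⟩
      · by_cases hnd : x ∈ Nd v
        · exact hnd
        · have : f x = f v + 1 := hfkid v (by omega) x ⟨hC, hnd⟩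
          omega
      · omega
    have h1 := Set.ncard_le_ncard hsub (Set.toFinite _)
    have h2 := hNdcard v
    have h3 := (hτ v).1
    omega
  have hiter := iterate_interval_eq G τ f H1 H2
  refine ⟨{v | f v = 0}, ?_, hf0, ?_⟩
  · refine ⟨Finset.univ.sup f, ?_⟩
    rw [hiter]
    ext v
    simp only [Set.mem_setOf_eq, Set.mem_univ, iff_true]
    exact Finset.le_sup (Finset.mem_univ v)
  · intro i hi1 hip
    constructor
    · rw [hiter]
      simp only [Set.mem_setOf_eq, hfvsi i hip]
      omega
    · rw [hiter]
      simp only [Set.mem_setOf_eq, hfvsi i hip]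
      omega
end

section
/- Let T be a tree and τ a threshold function on T. Then the maximum activation time t_τ(T) over all target sets equals the maximum number of edges of a path in T all of whose internal vertices v satisfy τ(v) < deg(v). -/
open TSS

namespace Stmt7Aux

variable {V : Type*}

lemma subset_interval (G : SimpleGraph V) (τ : V → ℕ) (S : Set V) : S ⊆ interval G τ S :=
  Set.subset_union_left

lemma iterate_succ_subset (G : SimpleGraph V) (τ : V → ℕ) (S : Set V) (t : ℕ) :
    (interval G τ)^[t] S ⊆ (interval G τ)^[t + 1] S := by
  rw [Function.iterate_succ_apply']
  exact subset_interval _ _ _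

lemma iterate_mono (G : SimpleGraph V) (τ : V → ℕ) (S : Set V) {a b : ℕ} (h : a ≤ b) :
    (interval G τ)^[a] S ⊆ (interval G τ)^[b] S := by
  induction b with
  | zero => simpa [Nat.le_zero.mp h]
  | succ b ih =>
    rcases Nat.lt_or_ge a (b + 1) with h' | h'
    · exact (ih (Nat.lt_succ_iff.mp h')).trans (iterate_succ_subset G τ S b)
    · have : a = b + 1 := le_antisymm h h'
      subst this; rfl

lemma interval_univ (G : SimpleGraph V) (τ : V → ℕ) :
    interval G τ (Set.univ : Set V) = Set.univ := by
  simp [interval]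

lemma stabSet_nonempty {G : SimpleGraph V} {τ : V → ℕ} {S : Set V} (hS : IsTargetSet G τ S) :
    {t : ℕ | (interval G τ)^[t + 1] S = (interval G τ)^[t] S}.Nonempty := by
  obtain ⟨t, ht⟩ := hS
  refine ⟨t, ?_⟩
  show (interval G τ)^[t + 1] S = (interval G τ)^[t] S
  rw [Function.iterate_succ_apply', ht, interval_univ]

lemma mem_interval_of_ncard {G : SimpleGraph V} {τ : V → ℕ} {S : Set V} {v : V}
    (h : τ v ≤ (G.neighborSet v ∩ S).ncard) : v ∈ interval G τ S :=
  Or.inr h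

lemma ncard_of_mem_interval {G : SimpleGraph V} {τ : V → ℕ} {S : Set V} {v : V}
    (h : v ∈ interval G τ S) (h' : v ∉ S) : τ v ≤ (G.neighborSet v ∩ S).ncard :=
  h.resolve_left h'

/-- The actTime of a target set is at most `card V`. -/
lemma actTime_le_card [Fintype V] {G : SimpleGraph V} {τ : V → ℕ} {S : Set V} :
    actTime G τ S ≤ Fintype.card V := by
  by_contra hlt
  push_neg at hlt
  have hns : ∀ t ≤ Fintype.card V,
      (interval G τ)^[t + 1] S ≠ (interval G τ)^[t] S := by
    intro t ht heq
    have h1 : actTime G τ S ≤ t := Nat.sInf_le heq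
    omega
  have key : ∀ t ≤ Fintype.card V + 1, t ≤ ((interval G τ)^[t] S).ncard := by
    intro t ht
    induction t with
    | zero => omega
    | succ t ih =>
      have h1 : (interval G τ)^[t] S ⊂ (interval G τ)^[t + 1] S :=
        (iterate_succ_subset G τ S t).ssubset_of_ne (Ne.symm (hns t (by omega)))
      have := Set.ncard_lt_ncard h1 (Set.toFinite _)
      have := ih (by omega)
      omega
  have h2 := key (Fintype.card V + 1) le_rfl
  have h3 : ((interval G τ)^[Fintype.card V + 1] S).ncard ≤ Fintype.card V := by
    have := Set.ncard_le_ncard (Set.subset_univ ((interval G τ)^[Fintype.card V + 1] S))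
      (Set.toFinite _)
    simpa [Set.ncard_univ] using this
  omega

lemma maxTime_bddAbove [Fintype V] (G : SimpleGraph V) (τ : V → ℕ) :
    BddAbove {t : ℕ | ∃ S : Set V, IsTargetSet G τ S ∧ actTime G τ S = t} := by
  refine ⟨Fintype.card V, fun t ht => ?_⟩
  obtain ⟨S, _, rfl⟩ := ht
  exact actTime_le_card

end Stmt7Aux

namespace Stmt7Aux

variable {V : Type*}

lemma chain_exists [Fintype V] (G : SimpleGraph V) (τ : V → ℕ) (hτ1 : ∀ x : V, 1 ≤ τ x)
    (S : Set V) :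
    ∀ k : ℕ, ∀ v : V, v ∈ (interval G τ)^[k] S → (∀ j < k, v ∉ (interval G τ)^[j] S) →
    ∃ ws : ℕ → V, ws k = v ∧ (∀ i ≤ k, ws i ∈ (interval G τ)^[i] S) ∧
      (∀ i ≤ k, ∀ j < i, ws i ∉ (interval G τ)^[j] S) ∧
      (∀ i < k, G.Adj (ws i) (ws (i + 1))) := by
  intro k
  induction k with
  | zero =>
    intro v hv _
    exact ⟨fun _ => v, rfl, fun i hi => by simpa [Nat.le_zero.mp hi] using hv,
      fun i hi j hj => by omega, fun i hi => by omega⟩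
  | succ k ih =>
    intro v hv hnv
    have hvk : v ∉ (interval G τ)^[k] S := hnv k (by omega)
    rw [Function.iterate_succ_apply'] at hv
    have hvi : v ∈ interval G τ ((interval G τ)^[k] S) := hv
    have hτv : τ v ≤ (G.neighborSet v ∩ (interval G τ)^[k] S).ncard :=
      ncard_of_mem_interval hvi hvk
    have hu : ∃ u, u ∈ G.neighborSet v ∩ (interval G τ)^[k] S ∧
        ∀ j < k, u ∉ (interval G τ)^[j] S := by
      rcases Nat.eq_zero_or_pos k with rfl | hk
      · have hne : (G.neighborSet v ∩ (interval G τ)^[0] S).Nonempty := by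
          rw [← Set.ncard_pos (Set.toFinite _)]
          exact lt_of_lt_of_le (hτ1 v) hτv
        obtain ⟨u, hu⟩ := hne
        exact ⟨u, hu, fun j hj => by omega⟩
      · by_contra hno
        push_neg at hno
        have hsub : G.neighborSet v ∩ (interval G τ)^[k] S ⊆
            G.neighborSet v ∩ (interval G τ)^[k - 1] S := by
          rintro u ⟨hu1, hu2⟩
          obtain ⟨j, hj, hj2⟩ := hno u ⟨hu1, hu2⟩
          exact ⟨hu1, iterate_mono G τ S (by omega) hj2⟩
        have : τ v ≤ (G.neighborSet v ∩ (interval G τ)^[k - 1] S).ncard :=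
          le_trans hτv (Set.ncard_le_ncard hsub (Set.toFinite _))
        have hvk1 : v ∈ interval G τ ((interval G τ)^[k - 1] S) :=
          mem_interval_of_ncard this
        have hkk : (interval G τ)^[k] S = interval G τ ((interval G τ)^[k - 1] S) := by
          conv_lhs => rw [show k = (k - 1) + 1 from by omega]
          rw [Function.iterate_succ_apply']
        rw [← hkk] at hvk1
        exact hvk hvk1
    rw [← Function.iterate_succ_apply' (interval G τ) k S] at hv
    obtain ⟨u, ⟨huN, huk⟩, hupast⟩ := hu
    obtain ⟨ws', hw0, hw1, hw2, hw3⟩ := ih u huk hupast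
    refine ⟨fun i => if i ≤ k then ws' i else v, ?_, ?_, ?_, ?_⟩
    · simp
    · intro i hi
      by_cases h : i ≤ k
      · simpa [h] using hw1 i h
      · have : i = k + 1 := by omega
        simpa [this] using hv
    · intro i hi j hj
      by_cases h : i ≤ k
      · simpa [h, show ¬ (k + 1 ≤ k) from by omega] using hw2 i h j hj
      · have hik : i = k + 1 := by omega
        simp only [hik, show ¬ (k + 1 ≤ k) from by omega, if_false]
        exact hnv j (by omega)
    · intro i hi
      by_cases h : i < k
      · simpa [show i ≤ k from by omega, show i + 1 ≤ k from by omega] using hw3 i h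
      · have hik : i = k := by omega
        subst hik
        simp only [le_rfl, if_pos, show ¬ (i + 1 ≤ i) from by omega, if_false]
        rw [hw0]
        exact huN.symm

/-- Upper bound: the activation time of a target set is witnessed by a path
with non-saturated internal vertices. -/
lemma upper [Fintype V] (hne : Nonempty V) (G : SimpleGraph V) (τ : V → ℕ)
    (hτ1 : ∀ x : V, 1 ≤ τ x) (S : Set V) (hS : IsTargetSet G τ S) :
    actTime G τ S ∈ {n : ℕ | ∃ vs : ℕ → V,
      (∀ i ≤ n, ∀ j ≤ n, vs i = vs j → i = j) ∧
      (∀ i < n, G.Adj (vs i) (vs (i + 1))) ∧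
      (∀ i : ℕ, 0 < i → i < n → τ (vs i) < (G.neighborSet (vs i)).ncard)} := by
  set k := actTime G τ S with hk
  rcases Nat.eq_zero_or_pos k with hk0 | hkpos
  · obtain ⟨v⟩ := hne
    refine ⟨fun _ => v, fun i hi j hj _ => by omega, fun i hi => by omega,
      fun i hi1 hi2 => by omega⟩
  · -- k ≥ 1 : find a vertex activated exactly at time k
    have hkmem : k ∈ {t : ℕ | (interval G τ)^[t + 1] S = (interval G τ)^[t] S} :=
      Nat.sInf_mem (stabSet_nonempty hS)
    have hknot : k - 1 ∉ {t : ℕ | (interval G τ)^[t + 1] S = (interval G τ)^[t] S} := by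
      intro h
      have h2 : actTime G τ S ≤ k - 1 := Nat.sInf_le h
      omega
    have hne : (interval G τ)^[k - 1 + 1] S ≠ (interval G τ)^[k - 1] S := hknot
    have hss : (interval G τ)^[k - 1] S ⊂ (interval G τ)^[k - 1 + 1] S :=
      (iterate_succ_subset G τ S (k - 1)).ssubset_of_ne (Ne.symm hne)
    obtain ⟨v, hv1, hv2⟩ := Set.exists_of_ssubset hss
    have hkk : k - 1 + 1 = k := by omega
    rw [hkk] at hv1
    have hvpast : ∀ j < k, v ∉ (interval G τ)^[j] S := fun j hj hmem =>
      hv2 (iterate_mono G τ S (by omega) hmem)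
    obtain ⟨ws, hw0, hw1, hw2, hw3⟩ := chain_exists G τ hτ1 S k v hv1 hvpast
    refine ⟨ws, ?_, hw3, ?_⟩
    · intro i hi j hj heq
      by_contra hij
      rcases Nat.lt_or_ge i j with h | h
      · exact hw2 j hj i h (heq ▸ hw1 i (by omega))
      · have : j < i := by omega
        exact hw2 i hi j this (heq ▸ hw1 j (by omega))
    · intro i hi1 hi2
      have hmem : ws i ∈ (interval G τ)^[i] S := hw1 i (by omega)
      have hnot : ws i ∉ (interval G τ)^[i - 1] S := hw2 i (by omega) (i - 1) (by omega)
      have hii : i - 1 + 1 = i := by omega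
      have hint : ws i ∈ interval G τ ((interval G τ)^[i - 1] S) := by
        have hiter : (interval G τ)^[i] S = interval G τ ((interval G τ)^[i - 1] S) := by
          conv_lhs => rw [show i = (i - 1) + 1 from by omega]
          rw [Function.iterate_succ_apply']
        rwa [hiter] at hmem
      have hτi : τ (ws i) ≤ (G.neighborSet (ws i) ∩ (interval G τ)^[i - 1] S).ncard :=
        ncard_of_mem_interval hint hnot
      have hnext : ws (i + 1) ∈ G.neighborSet (ws i) := (hw3 i hi2)
      have hnextnot : ws (i + 1) ∉ (interval G τ)^[i - 1] S :=
        hw2 (i + 1) (by omega) (i - 1) (by omega)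
      have hss2 : G.neighborSet (ws i) ∩ (interval G τ)^[i - 1] S ⊂ G.neighborSet (ws i) := by
        constructor
        · exact Set.inter_subset_left
        · intro hsub
          exact hnextnot (hsub hnext).2
      calc τ (ws i) ≤ (G.neighborSet (ws i) ∩ (interval G τ)^[i - 1] S).ncard := hτi
        _ < (G.neighborSet (ws i)).ncard := Set.ncard_lt_ncard hss2 (Set.toFinite _)

end Stmt7Aux

namespace Stmt7Aux

open SimpleGraph

variable {V : Type*}

lemma head?_support {G : SimpleGraph V} {a b : V} (w : G.Walk a b) :
    w.support.head? = some a := by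
  cases w <;> simp

lemma walk_eq_of_isPath {G : SimpleGraph V} (hT : G.IsTree) {a b : V}
    {p q : G.Walk a b} (hp : p.IsPath) (hq : q.IsPath) : p = q := by
  obtain ⟨w, -, hw⟩ := hT.existsUnique_path a b
  rw [hw p hp, hw q hq]

lemma dist_support_le {G : SimpleGraph V} {r x : V} (w : G.Walk r x) {y : V}
    (hy : y ∈ w.support) : G.dist r y ≤ w.length := by
  classical
  exact le_trans (SimpleGraph.dist_le (w.takeUntil y hy)) (Walk.length_takeUntil_le w hy)

lemma adj_dist_cases {G : SimpleGraph V} (hT : G.IsTree) {r x c : V} (h : G.Adj x c) :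
    G.dist r c = G.dist r x + 1 ∨ G.dist r x = G.dist r c + 1 := by
  classical
  have hconn := hT.isConnected
  have hxc : G.dist x c = 1 := SimpleGraph.dist_eq_one_iff_adj.mpr h
  have hcx : G.dist c x = 1 := SimpleGraph.dist_eq_one_iff_adj.mpr h.symm
  have h1 : G.dist r c ≤ G.dist r x + 1 := by
    have := hconn.dist_triangle (u := r) (v := x) (w := c)
    omega
  have h2 : G.dist r x ≤ G.dist r c + 1 := by
    have := hconn.dist_triangle (u := r) (v := c) (w := x)
    omega
  suffices hne : G.dist r c ≠ G.dist r x by omega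
  intro heq
  rcases Nat.eq_zero_or_pos (G.dist r x) with h0 | hpos
  · have hx : r = x := (hconn.dist_eq_zero_iff).mp h0
    have hc : r = c := (hconn.dist_eq_zero_iff).mp (by omega)
    exact G.ne_of_adj h (hx ▸ hc ▸ rfl)
  · obtain ⟨Q, hQlen⟩ := hconn.exists_walk_length_eq_dist r x
    have hQpath : Q.IsPath := Q.isPath_of_length_eq_dist hQlen
    have hcQ : c ∉ Q.support := by
      intro hc
      have hsplit : (Q.takeUntil c hc).length + (Q.dropUntil c hc).length = Q.length := by
        have h5 : ((Q.takeUntil c hc).append (Q.dropUntil c hc)).length = Q.length := by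
          rw [Q.take_spec hc]
        rwa [Walk.length_append] at h5
      have hd1 : G.dist r c ≤ (Q.takeUntil c hc).length := SimpleGraph.dist_le _
      have hd2 : 1 ≤ (Q.dropUntil c hc).length := by
        by_contra hz
        push_neg at hz
        have hz0 : (Q.dropUntil c hc).length = 0 := by omega
        have : c = x := Walk.eq_of_length_eq_zero hz0
        exact G.ne_of_adj h this.symm
      omega
    have hWpath : (Q.concat h).IsPath := by
      rw [Walk.isPath_def, Walk.support_concat]
      refine List.Nodup.append hQpath.support_nodup (List.nodup_singleton c) ?_
      intro y hy hy2
      rw [List.mem_singleton] at hy2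
      exact hcQ (hy2 ▸ hy)
    obtain ⟨Q', hQ'len⟩ := hconn.exists_walk_length_eq_dist r c
    have hQ'path : Q'.IsPath := Q'.isPath_of_length_eq_dist hQ'len
    have := walk_eq_of_isPath hT hWpath hQ'path
    have hlen := congrArg Walk.length this
    rw [Walk.length_concat] at hlen
    omega

lemma parent_unique {G : SimpleGraph V} (hT : G.IsTree) {r x p q : V}
    (hp : G.Adj p x) (hq : G.Adj q x)
    (hdp : G.dist r p + 1 = G.dist r x) (hdq : G.dist r q + 1 = G.dist r x) : p = q := by
  have hconn := hT.isConnected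
  obtain ⟨Qp, hQp⟩ := hconn.exists_walk_length_eq_dist r p
  obtain ⟨Qq, hQq⟩ := hconn.exists_walk_length_eq_dist r q
  have hWp : (Qp.concat hp).IsPath :=
    (Qp.concat hp).isPath_of_length_eq_dist (by rw [Walk.length_concat]; omega)
  have hWq : (Qq.concat hq).IsPath :=
    (Qq.concat hq).isPath_of_length_eq_dist (by rw [Walk.length_concat]; omega)
  have heq := walk_eq_of_isPath hT hWp hWq
  have h2 := congrArg (fun w : G.Walk r x => w.reverse.support.tail.head?) heq
  simp only [Walk.reverse_concat, Walk.support_cons, List.tail_cons, head?_support] at h2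
  exact Option.some_injective _ h2

/-- distances along the special path -/
lemma dist_path {G : SimpleGraph V} (hT : G.IsTree) {n : ℕ} {vs : ℕ → V}
    (hinj : ∀ i ≤ n, ∀ j ≤ n, vs i = vs j → i = j)
    (hadj : ∀ i < n, G.Adj (vs i) (vs (i + 1))) :
    ∀ j ≤ n, G.dist (vs 0) (vs j) = j := by
  have hconn := hT.isConnected
  have key : ∀ j ≤ n, ∃ w : G.Walk (vs 0) (vs j),
      w.support = (List.range (j + 1)).map vs ∧ w.length = j := by
    intro j
    induction j with
    | zero => exact fun _ => ⟨Walk.nil, by simp [List.range_succ], rfl⟩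
    | succ j ih =>
      intro hj
      obtain ⟨w, hws, hwl⟩ := ih (by omega)
      refine ⟨w.concat (hadj j (by omega)), ?_, by rw [Walk.length_concat, hwl]⟩
      rw [Walk.support_concat, hws, List.range_succ (n := j + 1),
        List.map_append]
      simp
  intro j hj
  obtain ⟨w, hws, hwl⟩ := key j hj
  have hnodup : w.support.Nodup := by
    rw [hws]
    refine List.Nodup.map_on ?_ List.nodup_range
    intro i hi i' hi' hii
    rw [List.mem_range] at hi hi'
    exact hinj i (by omega) i' (by omega) hii
  have hpath : w.IsPath := Walk.IsPath.mk' hnodup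
  obtain ⟨Q, hQ⟩ := hconn.exists_walk_length_eq_dist (vs 0) (vs j)
  have hQpath : Q.IsPath := Q.isPath_of_length_eq_dist hQ
  have hwq := walk_eq_of_isPath hT hpath hQpath
  rw [← hQ, ← hwq]
  exact hwl

end Stmt7Aux

namespace Stmt7Aux

open SimpleGraph

open Classical in
/-- Fueled recursion computing the activation level in the lower-bound construction. -/
noncomputable def Faux {V : Type*} (v1 v0 : V) (par : V → V) (K : V → Set V) :
    ℕ → V → ℕ
  | 0, _ => 0
  | (k + 1), x =>
    if x = v1 then 1
    else if x = v0 then 0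
    else if 1 ≤ Faux v1 v0 par K k (par x) ∧ x ∉ K (par x)
      then Faux v1 v0 par K k (par x) + 1 else 0

variable {V : Type*}

lemma lower [Fintype V] (G : SimpleGraph V) (hT : G.IsTree) (τ : V → ℕ)
    (hτ : ∀ x : V, 1 ≤ τ x ∧ τ x ≤ (G.neighborSet x).ncard)
    {n : ℕ} {vs : ℕ → V} (hn : 1 ≤ n)
    (hinj : ∀ i ≤ n, ∀ j ≤ n, vs i = vs j → i = j)
    (hadj : ∀ i < n, G.Adj (vs i) (vs (i + 1)))
    (hns : ∀ i : ℕ, 0 < i → i < n → τ (vs i) < (G.neighborSet (vs i)).ncard) :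
    ∃ S : Set V, IsTargetSet G τ S ∧ n ≤ actTime G τ S := by
  classical
  have hconn := hT.isConnected
  have hdist : ∀ j ≤ n, G.dist (vs 0) (vs j) = j := dist_path hT hinj hadj
  have hd0 : G.dist (vs 0) (vs 0) = 0 := SimpleGraph.dist_self
  -- parent function
  have hparex : ∀ x : V, ∃ p : V, x ≠ vs 0 →
      (G.Adj p x ∧ G.dist (vs 0) p + 1 = G.dist (vs 0) x) := by
    intro x
    by_cases hx : x = vs 0
    · exact ⟨x, fun h => absurd hx h⟩
    · have hdx : G.dist (vs 0) x ≠ 0 := by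
        intro h0
        exact hx ((hconn.dist_eq_zero_iff).mp h0).symm
      obtain ⟨w, hw⟩ := hconn.exists_walk_length_eq_dist (vs 0) x
      obtain ⟨b, hadj', q, hq⟩ := Walk.exists_eq_cons_of_ne hx w.reverse
      refine ⟨b, fun _ => ⟨hadj'.symm, ?_⟩⟩
      have hlb : G.dist (vs 0) b ≤ q.length := by
        have := SimpleGraph.dist_le q.reverse
        rwa [Walk.length_reverse] at this
      have hwlen : w.length = q.length + 1 := by
        have := congrArg Walk.length hq
        rwa [Walk.length_reverse, Walk.length_cons] at this
      have htri : G.dist (vs 0) x ≤ G.dist (vs 0) b + 1 := by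
        have h1 : G.dist b x = 1 := SimpleGraph.dist_eq_one_iff_adj.mpr hadj'.symm
        have := hconn.dist_triangle (u := vs 0) (v := b) (w := x)
        omega
      omega
  choose par hpar using hparex
  have hpar1 : ∀ x, x ≠ vs 0 → G.Adj (par x) x := fun x hx => (hpar x hx).1
  have hpar2 : ∀ x, x ≠ vs 0 → G.dist (vs 0) (par x) + 1 = G.dist (vs 0) x :=
    fun x hx => (hpar x hx).2
  have huniq : ∀ x p, G.Adj p x → G.dist (vs 0) p + 1 = G.dist (vs 0) x → p = par x := by
    intro x p hpx hdp
    have hx : x ≠ vs 0 := by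
      intro h
      rw [h, hd0] at hdp
      omega
    exact parent_unique hT hpx (hpar1 x hx) hdp (hpar2 x hx)
  have hparvs : ∀ j < n, par (vs (j + 1)) = vs j := by
    intro j hj
    exact (huniq (vs (j + 1)) (vs j) (hadj j hj)
      (by rw [hdist j (by omega), hdist (j + 1) (by omega)])).symm
  have hparv1 : par (vs 1) = vs 0 := by
    have := hparvs 0 (by omega)
    simpa using this
  -- children
  set child : V → Set V := fun x => G.neighborSet x \ {par x} with hchild_def
  have hchildN : ∀ x, child x ⊆ G.neighborSet x := fun x => Set.diff_subset
  have hparmemN : ∀ x, x ≠ vs 0 → par x ∈ G.neighborSet x := fun x hx => (hpar1 x hx).symm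
  have hchildcard : ∀ x, x ≠ vs 0 → (child x).ncard = (G.neighborSet x).ncard - 1 := by
    intro x hx
    exact Set.ncard_diff_singleton_of_mem (hparmemN x hx)
  -- choice of kept children K
  have hKex : ∀ x : V, ∃ Kx : Set V,
      (x ≠ vs 0 → Kx ⊆ child x ∧ Kx.ncard = τ x - 1) ∧
      (∀ j, 1 ≤ j → j < n → x = vs j → vs (j + 1) ∉ Kx) := by
    intro x
    by_cases hx : ∃ j, 1 ≤ j ∧ j < n ∧ x = vs j
    · obtain ⟨j, hj1, hj2, hjx⟩ := hx
      have hxr : x ≠ vs 0 := by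
        rw [hjx]
        intro h
        have := hinj j (by omega) 0 (by omega) h
        omega
      have hmem : vs (j + 1) ∈ child x := by
        constructor
        · rw [hjx]
          exact hadj j hj2
        · simp only [Set.mem_singleton_iff]
          intro h
          have hpx : par x = vs (j - 1) := by
            rw [hjx, show j = (j - 1) + 1 from by omega]
            exact hparvs (j - 1) (by omega)
          rw [hpx] at h
          have := hinj (j + 1) (by omega) (j - 1) (by omega) h
          omega
      have hcard2 : (child x \ {vs (j + 1)}).ncard = (G.neighborSet x).ncard - 2 := by
        rw [Set.ncard_diff_singleton_of_mem hmem, hchildcard x hxr]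
        omega
      have hτx : τ x < (G.neighborSet x).ncard := by rw [hjx]; exact hns j hj1 hj2
      have hτ1 : 1 ≤ τ x := (hτ x).1
      obtain ⟨Kx, hK1, hK2⟩ := Set.exists_subset_card_eq
        (show τ x - 1 ≤ (child x \ {vs (j + 1)}).ncard from by omega)
      refine ⟨Kx, fun _ => ⟨hK1.trans Set.diff_subset, hK2⟩, ?_⟩
      intro j' h1 h2 hxj' hmem'
      have hjj : j' = j := by
        apply hinj j' (by omega) j (by omega)
        rw [← hxj', ← hjx]
      subst hjj
      exact (hK1 hmem').2 rfl
    · by_cases hxr : x = vs 0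
      · exact ⟨∅, fun h => absurd hxr h, by simp⟩
      · have hτx := (hτ x).2
        have hτ1 := (hτ x).1
        have hNcard : 1 ≤ (G.neighborSet x).ncard := le_trans hτ1 hτx
        obtain ⟨Kx, hK1, hK2⟩ := Set.exists_subset_card_eq
          (show τ x - 1 ≤ (child x).ncard from by rw [hchildcard x hxr]; omega)
        refine ⟨Kx, fun _ => ⟨hK1, hK2⟩, ?_⟩
        intro j hj1 hj2 hxj
        exact absurd ⟨j, hj1, hj2, hxj⟩ hx
  choose K hKa hKb using hKex
  -- the level function
  set f : V → ℕ := fun x => Faux (vs 1) (vs 0) par K (G.dist (vs 0) x + 1) x with hfdef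
  have f_eq : ∀ x, f x = if x = vs 1 then 1 else if x = vs 0 then 0
      else if 1 ≤ f (par x) ∧ x ∉ K (par x) then f (par x) + 1 else 0 := by
    intro x
    show Faux (vs 1) (vs 0) par K (G.dist (vs 0) x + 1) x = _
    by_cases h1 : x = vs 1
    · rw [Faux, if_pos h1, if_pos h1]
    · by_cases h0 : x = vs 0
      · rw [Faux, if_neg h1, if_pos h0, if_neg h1, if_pos h0]
      · have hdx : G.dist (vs 0) x = G.dist (vs 0) (par x) + 1 := (hpar2 x h0).symm
        rw [Faux, if_neg h1, if_neg h0, if_neg h1, if_neg h0, hdx]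
  have hfr : f (vs 0) = 0 := by
    rw [f_eq, if_neg, if_pos rfl]
    intro h
    have := hinj 0 (by omega) 1 (by omega) h
    omega
  have hfvs : ∀ j ≤ n, f (vs j) = j := by
    intro j
    induction j with
    | zero => intro _; exact hfr
    | succ j ih =>
      intro hj
      rcases Nat.eq_zero_or_pos j with rfl | hjpos
      · rw [f_eq, if_pos rfl]
      · have hne1 : vs (j + 1) ≠ vs 1 := by
          intro h
          have := hinj (j + 1) (by omega) 1 (by omega) h
          omega
        have hne0 : vs (j + 1) ≠ vs 0 := by
          intro h
          have := hinj (j + 1) (by omega) 0 (by omega) h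
          omega
        rw [f_eq, if_neg hne1, if_neg hne0, hparvs j (by omega), ih (by omega), if_pos]
        constructor
        · omega
        · exact hKb (vs j) j hjpos (by omega) rfl
  have hfne_r : ∀ x, 1 ≤ f x → x ≠ vs 0 := by
    intro x h hx
    rw [hx, hfr] at h
    omega
  have hparf : ∀ x, 1 ≤ f x → f (par x) + 1 = f x := by
    intro x hx
    have hfx := f_eq x
    by_cases h1 : x = vs 1
    · rw [if_pos h1] at hfx
      rw [hfx, h1, hparv1, hfr]
    · by_cases h0 : x = vs 0
      · rw [if_neg h1, if_pos h0] at hfx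
        omega
      · rw [if_neg h1, if_neg h0] at hfx
        by_cases hc : 1 ≤ f (par x) ∧ x ∉ K (par x)
        · rw [if_pos hc] at hfx
          omega
        · rw [if_neg hc] at hfx
          omega
  have hchild_par : ∀ x, x ≠ vs 0 → ∀ c ∈ child x, par c = x ∧ c ≠ vs 1 ∧ c ≠ vs 0 := by
    intro x hx c hc
    obtain ⟨hcN, hcne⟩ := hc
    have hcadj : G.Adj x c := hcN
    have hcne' : c ≠ par x := by simpa using hcne
    have hcases := adj_dist_cases hT (r := vs 0) hcadj
    have hdc : G.dist (vs 0) c = G.dist (vs 0) x + 1 := by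
      rcases hcases with h | h
      · exact h
      · exfalso
        exact hcne' (huniq x c hcadj.symm (by omega))
    have hpc : par c = x := (huniq c x hcadj (by omega)).symm
    have hc0 : c ≠ vs 0 := by
      intro h
      rw [h, hd0] at hdc
      omega
    refine ⟨hpc, ?_, hc0⟩
    intro h
    rw [h, hparv1] at hpc
    exact hx hpc.symm
  have hchild_f : ∀ x, 1 ≤ f x → ∀ c ∈ child x,
      (c ∈ K x → f c = 0) ∧ (c ∉ K x → f c = f x + 1) := by
    intro x hx c hc
    obtain ⟨hpc, hc1, hc0⟩ := hchild_par x (hfne_r x hx) c hc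
    rw [f_eq c, if_neg hc1, if_neg hc0, hpc]
    constructor
    · intro hk
      rw [if_neg]
      rintro ⟨-, h2⟩
      exact h2 hk
    · intro hk
      rw [if_pos ⟨hx, hk⟩]
  have hparKx : ∀ x, x ≠ vs 0 → par x ∉ K x := by
    intro x hx h
    exact ((hKa x hx).1 h).2 rfl
  -- counting
  have main1 : ∀ x, 1 ≤ f x → τ x ≤ (G.neighborSet x ∩ {y | f y ≤ f x - 1}).ncard := by
    intro x hx
    have hxr := hfne_r x hx
    have hsub : insert (par x) (K x) ⊆ G.neighborSet x ∩ {y | f y ≤ f x - 1} := by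
      intro y hy
      rcases Set.mem_insert_iff.mp hy with rfl | hy
      · refine ⟨hparmemN x hxr, ?_⟩
        have := hparf x hx
        simp only [Set.mem_setOf_eq]
        omega
      · have hyc : y ∈ child x := (hKa x hxr).1 hy
        refine ⟨hchildN x hyc, ?_⟩
        have := (hchild_f x hx y hyc).1 hy
        simp only [Set.mem_setOf_eq]
        omega
    have hcard : (insert (par x) (K x)).ncard = τ x := by
      rw [Set.ncard_insert_of_notMem (hparKx x hxr) (Set.toFinite _), (hKa x hxr).2]
      have := (hτ x).1
      omega
    calc τ x = (insert (par x) (K x)).ncard := hcard.symm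
      _ ≤ _ := Set.ncard_le_ncard hsub (Set.toFinite _)
  have main2 : ∀ x t, t + 2 ≤ f x → (G.neighborSet x ∩ {y | f y ≤ t}).ncard < τ x := by
    intro x t hx
    have hx1 : 1 ≤ f x := by omega
    have hxr := hfne_r x hx1
    have hsub : G.neighborSet x ∩ {y | f y ≤ t} ⊆ K x := by
      rintro y ⟨hyN, hyA⟩
      simp only [Set.mem_setOf_eq] at hyA
      by_cases hyp : y = par x
      · exfalso
        have := hparf x hx1
        rw [hyp] at hyA
        omega
      · have hyc : y ∈ child x := ⟨hyN, by simpa using hyp⟩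
        by_cases hyK : y ∈ K x
        · exact hyK
        · exfalso
          have := (hchild_f x hx1 y hyc).2 hyK
          omega
    have h1 : (G.neighborSet x ∩ {y | f y ≤ t}).ncard ≤ (K x).ncard :=
      Set.ncard_le_ncard hsub (Set.toFinite _)
    have h2 := (hKa x hxr).2
    have h3 := (hτ x).1
    omega
  -- the invariant
  set S : Set V := {y | f y ≤ 0} with hSdef
  have hinv : ∀ t, (interval G τ)^[t] S = {y | f y ≤ t} := by
    intro t
    induction t with
    | zero => rfl
    | succ t ih =>
      rw [Function.iterate_succ_apply', ih]
      ext x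
      constructor
      · rintro (hx | hx)
        · simp only [Set.mem_setOf_eq] at hx ⊢
          omega
        · simp only [Set.mem_setOf_eq] at hx ⊢
          by_contra hgt
          push_neg at hgt
          exact absurd hx (not_le.mpr (main2 x t (by omega)))
      · intro hx
        simp only [Set.mem_setOf_eq] at hx
        by_cases hle : f x ≤ t
        · exact Or.inl hle
        · have hfx : f x = t + 1 := by omega
          right
          have := main1 x (by omega)
          rw [hfx] at this
          simpa using this
  have htarget : IsTargetSet G τ S := by
    refine ⟨Finset.univ.sup f, ?_⟩
    rw [hinv]
    apply Set.eq_univ_of_forall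
    intro x
    show f x ≤ Finset.univ.sup f
    exact Finset.le_sup (Finset.mem_univ x)
  refine ⟨S, htarget, ?_⟩
  apply le_csInf (stabSet_nonempty htarget)
  intro m hm
  by_contra hmn
  push_neg at hmn
  have h1 : (interval G τ)^[m + 1] S = (interval G τ)^[m] S := hm
  rw [hinv, hinv] at h1
  have h2 : vs (m + 1) ∈ {y | f y ≤ m + 1} := by
    simp only [Set.mem_setOf_eq]
    rw [hfvs (m + 1) (by omega)]
  rw [h1] at h2
  simp only [Set.mem_setOf_eq] at h2
  rw [hfvs (m + 1) (by omega)] at h2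
  omega

end Stmt7Aux

namespace Stmt7Aux

variable {V : Type*}

lemma rhs_bddAbove [Fintype V] (G : SimpleGraph V) (τ : V → ℕ) :
    BddAbove {n : ℕ | ∃ vs : ℕ → V,
      (∀ i ≤ n, ∀ j ≤ n, vs i = vs j → i = j) ∧
      (∀ i < n, G.Adj (vs i) (vs (i + 1))) ∧
      (∀ i : ℕ, 0 < i → i < n → τ (vs i) < (G.neighborSet (vs i)).ncard)} := by
  refine ⟨Fintype.card V, ?_⟩
  rintro m ⟨vs, hinj, -, -⟩
  have hcard : m + 1 ≤ Fintype.card V := by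
    have := Fintype.card_le_of_injective (fun i : Fin (m + 1) => vs i) ?_
    · simpa using this
    · intro a b hab
      exact Fin.ext (hinj a (by omega) b (by omega) hab)
  omega

lemma actTime_univ (G : SimpleGraph V) (τ : V → ℕ) :
    actTime G τ (Set.univ : Set V) = 0 := by
  apply Nat.sInf_eq_zero.mpr
  left
  show (interval G τ)^[0 + 1] Set.univ = (interval G τ)^[0] Set.univ
  simp [interval_univ]

end Stmt7Aux


open Stmt7Aux

/-- in a tree with threshold function τ, the maximum activation time
equals the maximum number of edges of a path all of whose internal vertices are
non-saturated. -/
theorem stmt7 {V : Type*} [Fintype V] (G : SimpleGraph V) (hT : G.IsTree)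
    (τ : V → ℕ) (hτ : ∀ x : V, 1 ≤ τ x ∧ τ x ≤ (G.neighborSet x).ncard) :
    TSS.maxTime G τ =
      sSup {n : ℕ | ∃ vs : ℕ → V,
        (∀ i ≤ n, ∀ j ≤ n, vs i = vs j → i = j) ∧
        (∀ i < n, G.Adj (vs i) (vs (i + 1))) ∧
        (∀ i : ℕ, 0 < i → i < n → τ (vs i) < (G.neighborSet (vs i)).ncard)} := by
  have hne : Nonempty V := hT.isConnected.nonempty
  obtain ⟨v⟩ := hne
  apply le_antisymm
  · apply csSup_le
    · exact ⟨0, Set.univ, ⟨0, rfl⟩, actTime_univ G τ⟩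
    · rintro k ⟨S, hS, rfl⟩
      exact le_csSup (rhs_bddAbove G τ) (upper ⟨v⟩ G τ (fun x => (hτ x).1) S hS)
  · apply csSup_le
    · exact ⟨0, fun _ => v, fun i hi j hj _ => by omega, fun i hi => by omega,
        fun i hi1 hi2 => by omega⟩
    · rintro n ⟨vs, hinj, hadj, hns⟩
      rcases Nat.eq_zero_or_pos n with rfl | hn
      · exact Nat.zero_le _
      · obtain ⟨S, hS, hle⟩ := lower G hT τ hτ hn hinj hadj hns
        exact le_trans hle (le_csSup (maxTime_bddAbove G τ) ⟨S, hS, rfl⟩)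
end

section
/- Let T be a tree, τ a generalized threshold function on T, and V_f = {u ∈ V(T) : τ(u) > deg(u)}. For every set S₀ with V_f ⊆ S₀ and every vertex v ∈ H_τ(S₀) (the set of all vertices eventually activated by S₀), there exists a target set S_v ⊇ S₀ such that the activation time of v under S_v equals the activation time of v under S₀. -/
open TSS SimpleGraph

namespace Stmt10Aux

variable {V : Type*} [Fintype V] {G : SimpleGraph V} {τ : V → ℕ}

/-! ### Basic properties of the interval operator -/

lemma mem_interval_iff {S : Set V} {w : V} :
    w ∈ interval G τ S ↔ w ∈ S ∨ τ w ≤ (G.neighborSet w ∩ S).ncard := Iff.rfl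

lemma subset_interval (S : Set V) : S ⊆ interval G τ S := Set.subset_union_left

lemma interval_mono {S T : Set V} (h : S ⊆ T) : interval G τ S ⊆ interval G τ T := by
  intro w hw
  rcases hw with hw | hw
  · exact Or.inl (h hw)
  · refine Or.inr ?_
    exact le_trans hw (Set.ncard_le_ncard (Set.inter_subset_inter_right _ h) (Set.toFinite _))

lemma iterate_mono_set {S T : Set V} (h : S ⊆ T) (t : ℕ) :
    (interval G τ)^[t] S ⊆ (interval G τ)^[t] T := by
  induction t with
  | zero => simpa using h
  | succ t ih =>
      rw [Function.iterate_succ_apply', Function.iterate_succ_apply']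
      exact interval_mono ih

lemma iterate_subset_succ (S : Set V) (t : ℕ) :
    (interval G τ)^[t] S ⊆ (interval G τ)^[t + 1] S := by
  rw [Function.iterate_succ_apply']
  exact subset_interval _

lemma iterate_mono_t {S : Set V} {s t : ℕ} (h : s ≤ t) :
    (interval G τ)^[s] S ⊆ (interval G τ)^[t] S := by
  induction t with
  | zero => simp_all
  | succ t ih =>
      rcases Nat.lt_or_ge s (t + 1) with h' | h'
      · exact (ih (Nat.lt_succ_iff.mp h')).trans (iterate_subset_succ S t)
      · have : s = t + 1 := le_antisymm h h'
        subst this; rfl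

lemma iterate_subset_hull (S : Set V) (t : ℕ) :
    (interval G τ)^[t] S ⊆ hull G τ S := fun w hw => ⟨t, hw⟩

lemma subset_hull (S : Set V) : S ⊆ hull G τ S := fun w hw => ⟨0, hw⟩

lemma hull_mono {S T : Set V} (h : S ⊆ T) : hull G τ S ⊆ hull G τ T := by
  rintro w ⟨k, hk⟩
  exact ⟨k, iterate_mono_set h k hk⟩

lemma exists_fixed (S : Set V) :
    ∃ t : ℕ, (interval G τ)^[t + 1] S = (interval G τ)^[t] S := by
  by_contra hc
  push_neg at hc
  have key : ∀ t : ℕ, t ≤ ((interval G τ)^[t] S).ncard := by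
    intro t
    induction t with
    | zero => exact Nat.zero_le _
    | succ t ih =>
        have hss : (interval G τ)^[t] S ⊂ (interval G τ)^[t + 1] S :=
          (Set.ssubset_iff_subset_ne).mpr ⟨iterate_subset_succ S t, fun h => hc t h.symm⟩
        have := Set.ncard_lt_ncard hss (Set.toFinite _)
        omega
  have h1 := key (Fintype.card V + 1)
  have h2 : ((interval G τ)^[Fintype.card V + 1] S).ncard ≤ Fintype.card V := by
    have := Set.ncard_le_ncard (Set.subset_univ ((interval G τ)^[Fintype.card V + 1] S))
      (Set.toFinite _)
    simpa [Set.ncard_univ] using this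
  omega

lemma hull_eq_iterate (S : Set V) :
    ∃ t : ℕ, (interval G τ)^[t] S = hull G τ S := by
  obtain ⟨t, ht⟩ := exists_fixed (G := G) (τ := τ) S
  refine ⟨t, le_antisymm (iterate_subset_hull S t) ?_⟩
  have stable : ∀ k : ℕ, (interval G τ)^[t + k] S = (interval G τ)^[t] S := by
    intro k
    induction k with
    | zero => rfl
    | succ k ih =>
        have h2 : t + (k + 1) = (t + k) + 1 := by omega
        rw [h2, Function.iterate_succ_apply', ih,
          ← Function.iterate_succ_apply' (interval G τ) t S, ht]
  rintro w ⟨k, hk⟩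
  rcases Nat.le_total k t with h | h
  · exact iterate_mono_t h hk
  · obtain ⟨m, rfl⟩ := Nat.exists_eq_add_of_le h
    rw [stable m] at hk
    exact hk

lemma isTargetSet_of_hull_univ {S : Set V} (h : hull G τ S = Set.univ) :
    IsTargetSet G τ S := by
  obtain ⟨t, ht⟩ := hull_eq_iterate (G := G) (τ := τ) S
  exact ⟨t, by rw [ht, h]⟩

lemma mem_hull_of_card {S : Set V} {w : V}
    (h : τ w ≤ (G.neighborSet w ∩ hull G τ S).ncard) : w ∈ hull G τ S := by
  obtain ⟨t, ht⟩ := hull_eq_iterate (G := G) (τ := τ) S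
  refine ⟨t + 1, ?_⟩
  rw [Function.iterate_succ_apply']
  exact Or.inr (by rw [ht]; exact h)

lemma ncard_lt_of_not_mem_hull {S : Set V} {w : V} (h : w ∉ hull G τ S) :
    (G.neighborSet w ∩ hull G τ S).ncard < τ w := by
  by_contra hc
  push_neg at hc
  exact h (mem_hull_of_card hc)

/-! ### Tree lemmas -/

lemma path_unique (hT : G.IsTree) {a b : V} {p q : G.Walk a b}
    (hp : p.IsPath) (hq : q.IsPath) : p = q := by
  have := (isAcyclic_iff_path_unique.mp hT.2) ⟨p, hp⟩ ⟨q, hq⟩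
  exact congrArg Subtype.val this

lemma isPath_length_eq_dist (hT : G.IsTree) {a b : V} (p : G.Walk a b)
    (hp : p.IsPath) : p.length = G.dist a b := by
  letI := Classical.decEq V
  obtain ⟨q, hq⟩ := hT.1.exists_walk_length_eq_dist a b
  have hbp : q.bypass.IsPath := SimpleGraph.Walk.bypass_isPath q
  have : p = q.bypass := path_unique hT hp hbp
  rw [this]
  exact le_antisymm (hq ▸ SimpleGraph.Walk.length_bypass_le q) (hq ▸ G.dist_le q.bypass)

lemma dist_support_le (hT : G.IsTree) {a b z : V} {p : G.Walk a b} (hp : p.IsPath)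
    (hz : z ∈ p.support) : G.dist a z ≤ G.dist a b := by
  letI := Classical.decEq V
  have h1 : (p.takeUntil z hz).IsPath := hp.takeUntil hz
  have h2 := isPath_length_eq_dist hT _ h1
  have h3 := SimpleGraph.Walk.length_takeUntil_le p hz
  rw [isPath_length_eq_dist hT p hp] at h3
  omega

lemma dist_support_eq (hT : G.IsTree) {a b z : V} {p : G.Walk a b} (hp : p.IsPath)
    (hz : z ∈ p.support) (h : G.dist a z = G.dist a b) : z = b := by
  letI := Classical.decEq V
  have h1 : (p.takeUntil z hz).IsPath := hp.takeUntil hz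
  have h2 := isPath_length_eq_dist hT _ h1
  have hspec := SimpleGraph.Walk.take_spec p hz
  have hlen : (p.takeUntil z hz).length + (p.dropUntil z hz).length = p.length := by
    rw [← SimpleGraph.Walk.length_append, hspec]
  rw [isPath_length_eq_dist hT p hp] at hlen
  have : (p.dropUntil z hz).length = 0 := by omega
  exact SimpleGraph.Walk.eq_of_length_eq_zero this

lemma concat_isPath {a b c : V} {p : G.Walk a b} (hp : p.IsPath) (h : G.Adj b c)
    (hc : c ∉ p.support) : (p.concat h).IsPath := by
  rw [← SimpleGraph.Walk.isPath_reverse_iff, SimpleGraph.Walk.reverse_concat]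
  refine SimpleGraph.Walk.IsPath.cons ?_ ?_
  · rwa [SimpleGraph.Walk.isPath_reverse_iff]
  · rwa [SimpleGraph.Walk.support_reverse, List.mem_reverse]

lemma dist_adj_le (h : G.Adj a b) : G.dist a b ≤ 1 := by
  have := G.dist_le (SimpleGraph.Walk.cons h SimpleGraph.Walk.nil)
  simpa using this

/-- In a tree, the distances to adjacent vertices from a fixed root differ by exactly one. -/
lemma adj_dist_cases (hT : G.IsTree) (u : V) {z w : V} (hzw : G.Adj z w) :
    G.dist u z + 1 = G.dist u w ∨ G.dist u w + 1 = G.dist u z := by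
  letI := Classical.decEq V
  have hcon := hT.1
  have h1 : G.dist u z ≤ G.dist u w + 1 :=
    le_trans (hcon.dist_triangle (v := w)) (by have := dist_adj_le hzw.symm; omega)
  have h2 : G.dist u w ≤ G.dist u z + 1 :=
    le_trans (hcon.dist_triangle (v := z)) (by have := dist_adj_le hzw; omega)
  rcases Nat.lt_trichotomy (G.dist u z) (G.dist u w) with h | h | h
  · left; omega
  · -- impossible: equal distances for adjacent vertices in a tree
    exfalso
    have hzww : z ≠ w := hzw.ne
    have hd0 : G.dist u w ≠ 0 ∨ G.dist u z ≠ 0 := by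
      by_contra hc
      push_neg at hc
      have hz := (hcon.dist_eq_zero_iff).mp hc.1
      have hw := (hcon.dist_eq_zero_iff).mp hc.2
      exact hzww (hw.symm.trans hz)
    obtain ⟨q, hq⟩ := hcon.exists_walk_length_eq_dist u w
    have hbp : q.bypass.IsPath := SimpleGraph.Walk.bypass_isPath q
    set p := q.bypass with hpdef
    have hplen : p.length = G.dist u w := isPath_length_eq_dist hT p hbp
    have hznotin : z ∉ p.support := by
      intro hzin
      exact hzww (dist_support_eq hT hbp hzin h)
    have hpath2 : (p.concat hzw.symm).IsPath := concat_isPath hbp hzw.symm hznotin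
    have := isPath_length_eq_dist hT _ hpath2
    rw [SimpleGraph.Walk.length_concat, hplen] at this
    omega
  · right; omega

/-- Uniqueness of the neighbor closer to the root, in a tree. -/
lemma prev_unique (hT : G.IsTree) (u : V) {w p₁ p₂ : V}
    (h₁ : G.Adj p₁ w) (h₂ : G.Adj p₂ w)
    (d₁ : G.dist u p₁ + 1 = G.dist u w) (d₂ : G.dist u p₂ + 1 = G.dist u w) :
    p₁ = p₂ := by
  letI := Classical.decEq V
  have hcon := hT.1
  obtain ⟨q₁, hq₁⟩ := hcon.exists_walk_length_eq_dist u p₁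
  obtain ⟨q₂, hq₂⟩ := hcon.exists_walk_length_eq_dist u p₂
  set P₁ := q₁.bypass with hP₁
  set P₂ := q₂.bypass with hP₂
  have hP₁p : P₁.IsPath := SimpleGraph.Walk.bypass_isPath q₁
  have hP₂p : P₂.IsPath := SimpleGraph.Walk.bypass_isPath q₂
  have hl₁ : P₁.length = G.dist u p₁ := isPath_length_eq_dist hT P₁ hP₁p
  have hl₂ : P₂.length = G.dist u p₂ := isPath_length_eq_dist hT P₂ hP₂p
  have hw₁ : w ∉ P₁.support := by
    intro hin
    have := dist_support_le hT hP₁p hin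
    omega
  have hw₂ : w ∉ P₂.support := by
    intro hin
    have := dist_support_le hT hP₂p hin
    omega
  have hQ₁ : (P₁.concat h₁).IsPath := concat_isPath hP₁p h₁ hw₁
  have hQ₂ : (P₂.concat h₂).IsPath := concat_isPath hP₂p h₂ hw₂
  have heq : P₁.concat h₁ = P₂.concat h₂ := path_unique hT hQ₁ hQ₂
  have heqr : (P₁.concat h₁).reverse = (P₂.concat h₂).reverse := by rw [heq]
  rw [SimpleGraph.Walk.reverse_concat, SimpleGraph.Walk.reverse_concat] at heqr
  have hsup := congrArg SimpleGraph.Walk.support heqr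
  rw [SimpleGraph.Walk.support_cons, SimpleGraph.Walk.support_cons,
    SimpleGraph.Walk.support_eq_cons P₁.reverse, SimpleGraph.Walk.support_eq_cons P₂.reverse]
    at hsup
  simp only [List.cons.injEq] at hsup
  exact hsup.2.1

/-- Existence of the neighbor closer to the root. -/
lemma prev_exists (hcon : G.Connected) (u : V) {w : V} (hne : w ≠ u) :
    ∃ p : V, G.Adj p w ∧ G.dist u p + 1 = G.dist u w := by
  have hd : G.dist u w ≠ 0 := fun h => hne ((hcon.dist_eq_zero_iff).mp h).symm
  obtain ⟨q, hq⟩ := hcon.exists_walk_length_eq_dist u w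
  have hnotnil : ¬q.reverse.Nil := by
    rw [SimpleGraph.Walk.nil_iff_length_eq, SimpleGraph.Walk.length_reverse, hq]
    exact hd
  obtain ⟨x, h, r, hr⟩ := SimpleGraph.Walk.not_nil_iff.mp hnotnil
  -- h : G.Adj w x, r : G.Walk x u
  have hrlen : r.length = G.dist u w - 1 := by
    have := congrArg SimpleGraph.Walk.length hr
    rw [SimpleGraph.Walk.length_reverse, hq, SimpleGraph.Walk.length_cons] at this
    omega
  have hx1 : G.dist u x ≤ G.dist u w - 1 := by
    have := G.dist_le r.reverse
    rw [SimpleGraph.Walk.length_reverse, hrlen] at this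
    exact this
  have hx2 : G.dist u w ≤ G.dist u x + 1 :=
    le_trans (hcon.dist_triangle (v := x)) (by have := dist_adj_le h.symm; omega)
  exact ⟨x, h.symm, by omega⟩

end Stmt10Aux

open Stmt10Aux

section KeyLemma

variable {V : Type*} [Fintype V] {G : SimpleGraph V} {τ : V → ℕ}

/-- The key lemma: adding a non-hull vertex `u` farthest from `v` does not
accelerate `v`. -/
lemma no_accel (hT : G.IsTree) {S : Set V}
    (hVf : {x : V | (G.neighborSet x).ncard < τ x} ⊆ S)
    {v : V} (hv : v ∈ hull G τ S) {u : V} (hu : u ∉ hull G τ S)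
    (hmax : ∀ w : V, w ∉ hull G τ S → G.dist v w ≤ G.dist v u) :
    ∀ t : ℕ, v ∈ (interval G τ)^[t] (insert u S) → v ∈ (interval G τ)^[t] S := by
  letI := Classical.decEq V
  have hcon := hT.1
  set S' : Set V := insert u S with hS'def
  set H : Set V := hull G τ S with hHdef
  -- acceleration predicate
  set AccT : V → ℕ → Prop := fun w t =>
    w ∈ (interval G τ)^[t] S' ∧ w ∉ (interval G τ)^[t] S with hAccT
  by_contra hc
  push_neg at hc
  obtain ⟨t₀, ht₀S', ht₀S⟩ := hc
  have hAccv : ∃ t, AccT v t := ⟨t₀, ht₀S', ht₀S⟩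
  -- v ≠ u
  have hvu : v ≠ u := fun h => hu (h ▸ hv)
  -- basic facts about minimal acceleration times
  have hC1 : ∀ w : V, w ≠ u → (∃ t, AccT w t) →
      ∀ n, sInf {t | AccT w t} = n →
      1 ≤ n ∧ w ∉ (interval G τ)^[n - 1] S' ∧ AccT w n ∧
        τ w ≤ (G.neighborSet w ∩ (interval G τ)^[n - 1] S').ncard := by
    intro w hwu hex n hn
    have hmem : AccT w n := hn ▸ Nat.sInf_mem hex
    have hn1 : 1 ≤ n := by
      rcases Nat.eq_zero_or_pos n with h | h
      · exfalso
        subst h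
        obtain ⟨h1, h2⟩ := hmem
        simp only [Function.iterate_zero_apply] at h1 h2
        rcases h1 with h1 | h1
        · exact hwu h1
        · exact h2 h1
      · exact h
    have hnotpre : w ∉ (interval G τ)^[n - 1] S' := by
      intro hin
      have hwS : w ∉ (interval G τ)^[n - 1] S := fun hin' =>
        hmem.2 (iterate_mono_t (Nat.sub_le n 1) hin')
      have : sInf {t | AccT w t} ≤ n - 1 := Nat.sInf_le ⟨hin, hwS⟩
      omega
    have hnew : τ w ≤ (G.neighborSet w ∩ (interval G τ)^[n - 1] S').ncard := by
      have h1 : w ∈ (interval G τ)^[n] S' := hmem.1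
      have : n = (n - 1) + 1 := by omega
      rw [this, Function.iterate_succ_apply'] at h1
      rcases h1 with h1 | h1
      · exact absurd h1 hnotpre
      · exact h1
    exact ⟨hn1, hnotpre, hmem, hnew⟩
  -- C2: existence of an accelerated neighbor
  have hC2 : ∀ w : V, w ≠ u → (∃ t, AccT w t) →
      ∀ n, sInf {t | AccT w t} = n →
      ∃ z, G.Adj w z ∧ z ∈ (interval G τ)^[n - 1] S' ∧ z ∉ (interval G τ)^[n - 1] S := by
    intro w hwu hex n hn
    obtain ⟨hn1, hnotpre, hmem, hnew⟩ := hC1 w hwu hex n hn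
    by_contra hcon2
    push_neg at hcon2
    have hsub : G.neighborSet w ∩ (interval G τ)^[n - 1] S' ⊆
        G.neighborSet w ∩ (interval G τ)^[n - 1] S := by
      rintro z ⟨hz1, hz2⟩
      refine ⟨hz1, ?_⟩
      by_contra hz3
      exact hz3 (hcon2 z hz1 hz2)
    have hτ : τ w ≤ (G.neighborSet w ∩ (interval G τ)^[n - 1] S).ncard :=
      le_trans hnew (Set.ncard_le_ncard hsub (Set.toFinite _))
    have : w ∈ (interval G τ)^[n] S := by
      have : n = (n - 1) + 1 := by omega
      rw [this, Function.iterate_succ_apply']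
      exact Or.inr hτ
    exact hmem.2 this
  -- KD: uniqueness of accelerated neighbor (it is the one closer to u), by
  -- strong induction on the minimal acceleration time.
  have hKD : ∀ n : ℕ, ∀ w : V, w ≠ u → (∃ t, AccT w t) → sInf {t | AccT w t} = n →
      ∀ z, G.Adj z w → z ∈ (interval G τ)^[n - 1] S' → z ∉ (interval G τ)^[n - 1] S →
      G.dist u z + 1 = G.dist u w := by
    intro n
    induction n using Nat.strong_induction_on with
    | _ n ih =>
      intro w hwu hex hn z hadj hz1 hz2
      obtain ⟨hn1, hnotpre, hmem, hnew⟩ := hC1 w hwu hex n hn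
      rcases adj_dist_cases hT u hadj with h | h
      · exact h
      · exfalso
        -- z is farther from u; then w is the unique closer neighbor of z
        have hzu : z ≠ u := by
          intro hzeq
          subst hzeq
          rw [SimpleGraph.dist_self] at h
          -- dist u w + 1 = 0, impossible
          omega
        have hAccz : ∃ t, AccT z t := ⟨n - 1, hz1, hz2⟩
        set m := sInf {t | AccT z t} with hm
        have hmle : m ≤ n - 1 := Nat.sInf_le ⟨hz1, hz2⟩
        have hmlt : m < n := by omega
        obtain ⟨z', hz'adj, hz'1, hz'2⟩ := hC2 z hzu hAccz m hm.symm
        have hz'dist : G.dist u z' + 1 = G.dist u z :=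
          ih m hmlt z hzu hAccz hm.symm z' hz'adj.symm hz'1 hz'2
        have hzw' : z' = w := prev_unique hT u hz'adj.symm hadj.symm hz'dist (by omega)
        -- w ∈ I^[m-1] S' ⊆ I^[n-1] S', contradiction
        have : w ∈ (interval G τ)^[n - 1] S' :=
          iterate_mono_t (by omega) (hzw' ▸ hz'1)
        exact hnotpre this
  -- EX: the accelerated neighbor exists and is the closer one
  have hEX : ∀ w : V, w ≠ u → (∃ t, AccT w t) →
      ∀ n, sInf {t | AccT w t} = n →
      ∃ p, G.Adj p w ∧ G.dist u p + 1 = G.dist u w ∧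
        p ∈ (interval G τ)^[n - 1] S' ∧ p ∉ (interval G τ)^[n - 1] S := by
    intro w hwu hex n hn
    obtain ⟨z, hadj, hz1, hz2⟩ := hC2 w hwu hex n hn
    exact ⟨z, hadj.symm, hKD n w hwu hex hn z hadj.symm hz1 hz2, hz1, hz2⟩
  -- C4: a non-hull accelerated vertex has all its hull neighbors active early
  have hC4 : ∀ w : V, w ≠ u → w ∉ H → (∃ t, AccT w t) →
      ∀ n, sInf {t | AccT w t} = n →
      G.neighborSet w ∩ H ⊆ (interval G τ)^[n - 1] S := by
    intro w hwu hwH hex n hn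
    obtain ⟨hn1, hnotpre, hmem, hnew⟩ := hC1 w hwu hex n hn
    obtain ⟨p, hpadj, hpdist, hp1, hp2⟩ := hEX w hwu hex n hn
    have hsub : G.neighborSet w ∩ (interval G τ)^[n - 1] S' ⊆
        (G.neighborSet w ∩ (interval G τ)^[n - 1] S) ∪ {p} := by
      rintro z ⟨hz1, hz2⟩
      by_cases hzS : z ∈ (interval G τ)^[n - 1] S
      · exact Or.inl ⟨hz1, hzS⟩
      · have := hKD n w hwu hex hn z hz1.symm hz2 hzS
        have : z = p := prev_unique hT u hz1.symm hpadj this hpdist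
        exact Or.inr (by simp [this])
    have hcard1 : τ w ≤ (G.neighborSet w ∩ (interval G τ)^[n - 1] S).ncard + 1 := by
      calc τ w ≤ (G.neighborSet w ∩ (interval G τ)^[n - 1] S').ncard := hnew
        _ ≤ ((G.neighborSet w ∩ (interval G τ)^[n - 1] S) ∪ {p}).ncard :=
            Set.ncard_le_ncard hsub (Set.toFinite _)
        _ ≤ (G.neighborSet w ∩ (interval G τ)^[n - 1] S).ncard + ({p} : Set V).ncard :=
            Set.ncard_union_le _ _
        _ = (G.neighborSet w ∩ (interval G τ)^[n - 1] S).ncard + 1 := by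
            rw [Set.ncard_singleton]
    have hhull : (G.neighborSet w ∩ H).ncard < τ w := ncard_lt_of_not_mem_hull hwH
    have hsub2 : G.neighborSet w ∩ (interval G τ)^[n - 1] S ⊆ G.neighborSet w ∩ H :=
      Set.inter_subset_inter_right _ (iterate_subset_hull S (n - 1))
    have heq : G.neighborSet w ∩ (interval G τ)^[n - 1] S = G.neighborSet w ∩ H := by
      apply Set.eq_of_subset_of_ncard_le hsub2 ?_ (Set.toFinite _)
      have := Set.ncard_le_ncard hsub2 (Set.toFinite _)
      omega
    rw [← heq]
    exact Set.inter_subset_right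
  -- C5: hull vertex accelerated via a hull (or u) predecessor
  have hC5 : ∀ w : V, w ≠ u → w ∈ H → (∃ t, AccT w t) →
      ∀ n, sInf {t | AccT w t} = n →
      ∀ p, G.Adj p w → G.dist u p + 1 = G.dist u w →
        p ∈ (interval G τ)^[n - 1] S' → p ∉ (interval G τ)^[n - 1] S →
        p ≠ u → p ∈ H := by
    intro w hwu hwH hex n hn p hpadj hpdist hp1 hp2 hpu
    obtain ⟨hn1, hnotpre, hmem, hnew⟩ := hC1 w hwu hex n hn
    by_contra hpH
    have hAccp : ∃ t, AccT p t := ⟨n - 1, hp1, hp2⟩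
    set m := sInf {t | AccT p t} with hm
    have hmle : m ≤ n - 1 := Nat.sInf_le ⟨hp1, hp2⟩
    have hwmem : w ∈ G.neighborSet p ∩ H := ⟨hpadj, hwH⟩
    have := hC4 p hpu hpH hAccp m hm.symm hwmem
    have hwin : w ∈ (interval G τ)^[n] S := iterate_mono_t (by omega) this
    exact hmem.2 hwin
  -- E: by strong induction on dist u w, any accelerated hull vertex yields a
  -- hull neighbor of u close to w
  have hE : ∀ d : ℕ, ∀ w : V, G.dist u w = d → w ∈ H → (∃ t, AccT w t) → w ≠ u →
      ∃ c, c ∈ H ∧ G.Adj u c ∧ G.dist w c + 1 ≤ G.dist u w := by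
    intro d
    induction d using Nat.strong_induction_on with
    | _ d ih =>
      intro w hd hwH hex hwu
      set n := sInf {t | AccT w t} with hn
      obtain ⟨p, hpadj, hpdist, hp1, hp2⟩ := hEX w hwu hex n hn.symm
      by_cases hpu : p = u
      · refine ⟨w, hwH, hpu ▸ hpadj, ?_⟩
        rw [SimpleGraph.dist_self]
        have h0 : G.dist u u = 0 := SimpleGraph.dist_self
        have h1 := hpu ▸ hpdist
        omega
      · have hpH : p ∈ H := hC5 w hwu hwH hex n hn.symm p hpadj hpdist hp1 hp2 hpu
        have hAccp : ∃ t, AccT p t := ⟨n - 1, hp1, hp2⟩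
        have hplt : G.dist u p < d := by omega
        obtain ⟨c, hcH, hcadj, hcdist⟩ := ih (G.dist u p) hplt p rfl hpH hAccp hpu
        refine ⟨c, hcH, hcadj, ?_⟩
        have h1 : G.dist w c ≤ G.dist w p + G.dist p c :=
          hcon.dist_triangle
        have h2 : G.dist w p ≤ 1 := dist_adj_le hpadj.symm
        omega
  -- apply E to v
  obtain ⟨c, hcH, hcadj, hcdist⟩ := hE (G.dist u v) v rfl hv hAccv hvu
  -- c is the neighbor of u closer to v
  obtain ⟨y, hyadj, hydist⟩ := prev_exists hcon v (Ne.symm hvu)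
  -- dist v c + 1 = dist v u
  have hdcv : G.dist v c + 1 = G.dist v u := by
    have h1 : G.dist v u ≤ G.dist v c + 1 :=
      le_trans (hcon.dist_triangle (v := c)) (by have := dist_adj_le hcadj.symm; omega)
    have hc3 : G.dist u v = G.dist v u := SimpleGraph.dist_comm
    omega
  have hcy : c = y := prev_unique hT v hcadj.symm hyadj hdcv hydist
  -- y is not in the hull
  have hyH : y ∉ H := by
    intro hyinH
    -- then all neighbors of u are in the hull
    have hall : G.neighborSet u ⊆ H := by
      intro c' hc'
      have hc'adj : G.Adj u c' := hc'
      rcases adj_dist_cases hT v hc'adj.symm with h | h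
      · have : c' = y := prev_unique hT v hc'adj.symm hyadj h hydist
        rw [this]; exact hyinH
      · by_contra hc'H
        have := hmax c' hc'H
        omega
    have huS : u ∉ S := fun h => hu (subset_hull S h)
    have hτu : τ u ≤ (G.neighborSet u).ncard := by
      by_contra hτc
      push_neg at hτc
      exact huS (hVf hτc)
    have : τ u ≤ (G.neighborSet u ∩ H).ncard := by
      rwa [Set.inter_eq_self_of_subset_left hall]
    exact hu (mem_hull_of_card this)
  exact hyH (hcy ▸ hcH)

end KeyLemma

/-- in a tree with generalized threshold function, for any S₀
containing the forced set V_f and any v ∈ H(S₀), there is a target set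
S_v ⊇ S₀ activating v at the same time as S₀. -/
theorem stmt10 {V : Type*} [Fintype V] (G : SimpleGraph V) (hT : G.IsTree)
    (τ : V → ℕ) (S₀ : Set V)
    (hVf : {u : V | (G.neighborSet u).ncard < τ u} ⊆ S₀)
    (v : V) (hv : v ∈ TSS.hull G τ S₀) :
    ∃ Sv : Set V, S₀ ⊆ Sv ∧ TSS.IsTargetSet G τ Sv ∧
      TSS.vTime G τ Sv v = TSS.vTime G τ S₀ v := by
  classical
  -- strong induction on the number of non-hull vertices
  suffices h : ∀ n : ℕ, ∀ S : Set V,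
      {u : V | (G.neighborSet u).ncard < τ u} ⊆ S → v ∈ TSS.hull G τ S →
      (Set.univ \ TSS.hull G τ S).ncard = n →
      ∃ Sv : Set V, S ⊆ Sv ∧ TSS.IsTargetSet G τ Sv ∧
        TSS.vTime G τ Sv v = TSS.vTime G τ S v by
    exact h (Set.univ \ TSS.hull G τ S₀).ncard S₀ hVf hv rfl
  intro n
  induction n using Nat.strong_induction_on with
  | _ n ih =>
    intro S hVfS hvS hcard
    by_cases hfull : TSS.hull G τ S = Set.univ
    · exact ⟨S, subset_rfl, isTargetSet_of_hull_univ hfull, rfl⟩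
    · -- pick a non-hull vertex u farthest from v
      have hne : (Set.univ \ TSS.hull G τ S).Nonempty := by
        rw [Set.diff_nonempty]
        intro hsub
        exact hfull (le_antisymm (Set.subset_univ _) hsub)
      obtain ⟨u, humem, humax⟩ := Set.Finite.exists_maximalFor (fun w => G.dist v w)
        (Set.univ \ TSS.hull G τ S) (Set.toFinite _) hne
      have hu : u ∉ TSS.hull G τ S := humem.2
      have hmax : ∀ w : V, w ∉ TSS.hull G τ S → G.dist v w ≤ G.dist v u := by
        intro w hw
        by_contra hgt
        push_neg at hgt
        have := humax (j := w) ⟨Set.mem_univ w, hw⟩ (le_of_lt hgt)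
        simp only at this
        omega
      set S' : Set V := insert u S with hS'def
      have hVfS' : {x : V | (G.neighborSet x).ncard < τ x} ⊆ S' :=
        hVfS.trans (Set.subset_insert u S)
      have hSS' : S ⊆ S' := Set.subset_insert u S
      have hvS' : v ∈ TSS.hull G τ S' := hull_mono hSS' hvS
      have hcard' : (Set.univ \ TSS.hull G τ S').ncard < n := by
        rw [← hcard]
        apply Set.ncard_lt_ncard ?_ (Set.toFinite _)
        constructor
        · exact Set.diff_subset_diff_right (hull_mono hSS')
        · intro hsub
          have huS' : u ∈ TSS.hull G τ S' := subset_hull S' (Set.mem_insert u S)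
          have : u ∈ Set.univ \ TSS.hull G τ S' := hsub ⟨Set.mem_univ u, hu⟩
          exact this.2 huS'
      obtain ⟨Sv, hSv1, hSv2, hSv3⟩ := ih _ hcard' S' hVfS' hvS' rfl
      refine ⟨Sv, hSS'.trans hSv1, hSv2, ?_⟩
      rw [hSv3]
      -- vTime S' v = vTime S v, using the key no-acceleration lemma
      have hkey := no_accel hT hVfS hvS hu hmax
      unfold TSS.vTime
      congr 1
      apply Set.eq_of_subset_of_subset
      · intro k hk
        exact hkey k hk
      · intro k hk
        exact iterate_mono_set hSS' k hk
end

section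
/- For positive integers t and k with k > 1, let T be the tree consisting of a root v adjacent to one endpoint of each of k+1 vertex-disjoint paths of t vertices each, with threshold function τ(v) = k and τ(u) = 1 for all other vertices u. Then {v} is the unique minimum target set, t_τ({v}) = t, and the set S' consisting of the far-end leaves of any k of the k+1 paths is a target set with t_τ(S') = 2t; in particular t_τ(T) ≥ 2t. -/
open TSS

/-- Vertex set of the spider tree: a root plus k+1 paths of t vertices each. -/
def SpiderV (t k : ℕ) : Type := Unit ⊕ (Fin (k + 1) × Fin t)

/-- The spider tree: root adjacent to the first vertex of each of the k+1
paths of t vertices. -/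
def spider (t k : ℕ) : SimpleGraph (SpiderV t k) :=
  SimpleGraph.fromRel (fun a b =>
    match a, b with
    | Sum.inl _, Sum.inr (_, i) => i.1 = 0
    | Sum.inr (j, i), Sum.inr (j', i') => j = j' ∧ i.1 + 1 = i'.1
    | _, _ => False)

/-- Thresholds: k at the root, 1 elsewhere. -/
def spiderτ (t k : ℕ) : SpiderV t k → ℕ
  | Sum.inl _ => k
  | Sum.inr _ => 1

/-! ### Auxiliary infrastructure -/

namespace TSS

variable {G : SimpleGraph V} {τ : V → ℕ} {S : Set V}

lemma subset_interval' : S ⊆ interval G τ S := Set.subset_union_left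

lemma mem_interval {v : V} : v ∈ interval G τ S ↔ v ∈ S ∨ τ v ≤ (G.neighborSet v ∩ S).ncard :=
  Iff.rfl

lemma iter_subset_iter {m n : ℕ} (h : m ≤ n) :
    (interval G τ)^[m] S ⊆ (interval G τ)^[n] S := by
  induction n with
  | zero => simp_all
  | succ n ih =>
    rcases Nat.lt_or_ge m (n + 1) with h' | h'
    · refine (ih (by omega)).trans ?_
      rw [Function.iterate_succ_apply']
      exact subset_interval'
    · have : m = n + 1 := by omega
      subst this; rfl

lemma iter_stab {m : ℕ} (h : (interval G τ)^[m + 1] S = (interval G τ)^[m] S) {n : ℕ}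
    (hn : m ≤ n) : (interval G τ)^[n] S = (interval G τ)^[m] S := by
  induction n with
  | zero => have : m = 0 := by omega
            subst this; rfl
  | succ n ih =>
    rcases Nat.lt_or_ge m (n + 1) with h' | h'
    · have hmn : m ≤ n := by omega
      rw [Function.iterate_succ_apply', ih hmn]
      calc interval G τ ((interval G τ)^[m] S) = (interval G τ)^[m+1] S :=
            (Function.iterate_succ_apply' _ _ _).symm
        _ = (interval G τ)^[m] S := h
    · have : m = n + 1 := by omega
      subst this; rfl

lemma interval_univ : interval G τ (Set.univ : Set V) = Set.univ :=
  Set.univ_subset_iff.mp subset_interval'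

lemma actTime_eq {N : ℕ} (hN : (interval G τ)^[N] S = Set.univ)
    (hlt : ∀ m < N, (interval G τ)^[m] S ≠ Set.univ) : actTime G τ S = N := by
  have hmem : N ∈ {m : ℕ | (interval G τ)^[m + 1] S = (interval G τ)^[m] S} := by
    show _ = _
    rw [Function.iterate_succ_apply', hN, interval_univ]
  refine le_antisymm (Nat.sInf_le hmem) (le_csInf ⟨N, hmem⟩ ?_)
  intro m hm
  by_contra hc
  push_neg at hc
  have hst := iter_stab hm (le_of_lt hc)
  exact hlt m hc (hst ▸ hN)

lemma ncard_le_iter [Finite V] :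
    ∀ m : ℕ, (∀ l < m, (interval G τ)^[l + 1] S ≠ (interval G τ)^[l] S) →
      m ≤ ((interval G τ)^[m] S).ncard := by
  intro m
  induction m with
  | zero => intro _; omega
  | succ m ih =>
    intro h
    have hm := ih (fun l hl => h l (by omega))
    have hss : (interval G τ)^[m] S ⊂ (interval G τ)^[m + 1] S :=
      ⟨iter_subset_iter (by omega),
        fun hle => h m (by omega) (le_antisymm hle (iter_subset_iter (by omega)))⟩
    have := Set.ncard_lt_ncard hss (Set.toFinite _)
    omega

lemma actTime_le_card [Finite V] : actTime G τ S ≤ Nat.card V := by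
  by_contra h
  push_neg at h
  have h' : ∀ l ≤ Nat.card V, (interval G τ)^[l + 1] S ≠ (interval G τ)^[l] S := by
    intro l hl hc
    have := Nat.sInf_le
      (show l ∈ {m : ℕ | (interval G τ)^[m + 1] S = (interval G τ)^[m] S} from hc)
    unfold actTime at h
    omega
  have h2 := ncard_le_iter (Nat.card V + 1) (fun l hl => h' l (by omega))
  have hb : (((interval G τ)^[Nat.card V + 1]) S).ncard ≤ Nat.card V := by
    rw [← Set.ncard_univ]
    exact Set.ncard_le_ncard (Set.subset_univ _) Set.finite_univ
  omega

lemma mem_interval_of_adj [Finite V] {v w : V} (ha : G.Adj v w) (hw : w ∈ S) (hτ : τ v ≤ 1) :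
    v ∈ interval G τ S := by
  refine Or.inr ?_
  have hne : (G.neighborSet v ∩ S).Nonempty := ⟨w, ha, hw⟩
  have := (Set.ncard_pos (Set.toFinite _)).mpr hne
  simp only [Set.mem_setOf_eq]
  omega

lemma not_mem_interval_of {v : V} (h1 : v ∉ S) (h2 : ∀ w, G.Adj v w → w ∉ S)
    (hτ : 0 < τ v) : v ∉ interval G τ S := by
  intro hv
  rcases hv with h | h
  · exact h1 h
  · have he : G.neighborSet v ∩ S = ∅ := by
      ext w
      simp only [Set.mem_inter_iff, SimpleGraph.mem_neighborSet, Set.mem_empty_iff_false,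
        iff_false, not_and]
      exact h2 w
    rw [Set.mem_setOf_eq, he, Set.ncard_empty] at h
    omega

end TSS

/-! ### Spider-specific lemmas -/

instance (t k : ℕ) : Fintype (SpiderV t k) :=
  inferInstanceAs (Fintype (Unit ⊕ Fin (k + 1) × Fin t))

instance (t k : ℕ) : Finite (SpiderV t k) := Finite.of_fintype _

namespace Spider

variable {t k : ℕ}

lemma adj_inl_inr {u : Unit} {j : Fin (k + 1)} {i : Fin t} :
    (spider t k).Adj (Sum.inl u) (Sum.inr (j, i)) ↔ i.1 = 0 := by
  exact (SimpleGraph.fromRel_adj _ _ _).trans (by simp; exact fun _ => Sum.inl_ne_inr)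

lemma adj_inr_inl {u : Unit} {j : Fin (k + 1)} {i : Fin t} :
    (spider t k).Adj (Sum.inr (j, i)) (Sum.inl u) ↔ i.1 = 0 := by
  exact ((spider t k).adj_comm _ _).trans adj_inl_inr

lemma adj_inl_inl {u u' : Unit} : ¬ (spider t k).Adj (Sum.inl u) (Sum.inl u') := by
  exact fun h => by simpa using (SimpleGraph.fromRel_adj _ _ _).mp h

lemma adj_inr_inr {j j' : Fin (k + 1)} {i i' : Fin t} :
    (spider t k).Adj (Sum.inr (j, i)) (Sum.inr (j', i')) ↔
      j = j' ∧ (i.1 + 1 = i'.1 ∨ i'.1 + 1 = i.1) := by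
  simp only [spider, SimpleGraph.fromRel_adj, ne_eq, Sum.inr.injEq, Prod.mk.injEq]
  constructor
  · rintro ⟨hne, (⟨hj, hi⟩ | ⟨hj, hi⟩)⟩
    · exact ⟨hj, Or.inl hi⟩
    · exact ⟨hj.symm, Or.inr hi⟩
  · rintro ⟨hj, (hi | hi)⟩
    · refine ⟨?_, Or.inl ⟨hj, hi⟩⟩
      subst hj
      intro hcon
      have h2 : (j, i) = (j, i') := Sum.inr_injective hcon
      have h3 : i.1 = i'.1 := congrArg (fun p : Fin (k+1) × Fin t => p.2.1) h2
      omega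
    · refine ⟨?_, Or.inr ⟨hj.symm, hi⟩⟩
      subst hj
      intro hcon
      have h2 : (j, i) = (j, i') := Sum.inr_injective hcon
      have h3 : i.1 = i'.1 := congrArg (fun p : Fin (k+1) × Fin t => p.2.1) h2
      omega

lemma inr_eq_inr {j j' : Fin (k + 1)} {i i' : Fin t}
    (h : (Sum.inr (j, i) : SpiderV t k) = Sum.inr (j', i')) : j = j' ∧ i = i' := by
  have h2 : (j, i) = (j', i') := Sum.inr_injective h
  exact ⟨congrArg Prod.fst h2, congrArg Prod.snd h2⟩

lemma inl_ne_inr {u : Unit} {j : Fin (k + 1)} {i : Fin t} :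
    (Sum.inl u : SpiderV t k) ≠ Sum.inr (j, i) := Sum.inl_ne_inr

lemma adj_root_cases {w : SpiderV t k} (h : (spider t k).Adj (Sum.inl ()) w) :
    ∃ j : Fin (k + 1), ∃ i : Fin t, i.1 = 0 ∧ w = Sum.inr (j, i) := by
  match w with
  | Sum.inl u => exact absurd h adj_inl_inl
  | Sum.inr (j, i) => exact ⟨j, i, adj_inl_inr.mp h, rfl⟩

lemma adj_inr_cases {j : Fin (k + 1)} {i : Fin t} {w : SpiderV t k}
    (h : (spider t k).Adj (Sum.inr (j, i)) w) :
    (i.1 = 0 ∧ w = Sum.inl ()) ∨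
      ∃ i' : Fin t, (i.1 + 1 = i'.1 ∨ i'.1 + 1 = i.1) ∧ w = Sum.inr (j, i') := by
  match w with
  | Sum.inl () => exact Or.inl ⟨adj_inr_inl.mp h, rfl⟩
  | Sum.inr (j', i') =>
    obtain ⟨hj, hi⟩ := adj_inr_inr.mp h
    subst hj
    exact Or.inr ⟨i', hi, rfl⟩

lemma ncard_ne (j₀ : Fin (k + 1)) : ({j | j ≠ j₀} : Set (Fin (k + 1))).ncard = k := by
  have h1 : ({j | j ≠ j₀} : Set (Fin (k + 1))) = Set.univ \ {j₀} := by
    ext j; simp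
  rw [h1, Set.ncard_diff (Set.subset_univ _) (Set.toFinite _), Set.ncard_univ,
    Set.ncard_singleton, Nat.card_eq_fintype_card, Fintype.card_fin]
  omega

lemma ncard_leaves (j₀ : Fin (k + 1)) (c : Fin t) :
    ({x | ∃ j : Fin (k + 1), j ≠ j₀ ∧ x = Sum.inr (j, c)} : Set (SpiderV t k)).ncard = k := by
  have h1 : ({x | ∃ j : Fin (k + 1), j ≠ j₀ ∧ x = Sum.inr (j, c)} : Set (SpiderV t k)) =
      (fun j : Fin (k + 1) => (Sum.inr (j, c) : SpiderV t k)) '' {j | j ≠ j₀} := by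
    ext x
    simp only [Set.mem_setOf_eq, Set.mem_image]
    constructor
    · rintro ⟨j, hj, rfl⟩; exact ⟨j, hj, rfl⟩
    · rintro ⟨j, hj, rfl⟩; exact ⟨j, hj, rfl⟩
  have hinj : Function.Injective (fun j : Fin (k + 1) => (Sum.inr (j, c) : SpiderV t k)) := by
    intro a b hab
    exact ((inr_eq_inr hab).1)
  rw [h1]; erw [Set.ncard_image_of_injective _ hinj, ncard_ne]

/-! ### The sets arising from iterating from the root -/

/-- The set activated after `m` steps starting from the root. -/
def Aset (t k : ℕ) (m : ℕ) : Set (SpiderV t k) :=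
  {x | x = Sum.inl () ∨ ∃ j i, i.1 < m ∧ x = Sum.inr (j, i)}

lemma Aset_zero : Aset t k 0 = ({Sum.inl ()} : Set (SpiderV t k)) := by
  ext x
  simp only [Aset, Set.mem_setOf_eq, Set.mem_singleton_iff]
  constructor
  · rintro (h | ⟨j, i, hi, rfl⟩)
    · exact h
    · omega
  · intro h; exact Or.inl h

lemma Aset_mono {m m' : ℕ} (h : m ≤ m') : Aset t k m ⊆ Aset t k m' := by
  rintro x (hx | ⟨j, i, hi, rfl⟩)
  · exact Or.inl hx
  · exact Or.inr ⟨j, i, by omega, rfl⟩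

lemma Aset_step (m : ℕ) :
    interval (spider t k) (spiderτ t k) (Aset t k m) = Aset t k (m + 1) := by
  ext x
  constructor
  · intro hx
    rcases mem_interval.mp hx with h | h
    · exact Aset_mono (by omega) h
    · match x with
      | Sum.inl u => exact Or.inl rfl
      | Sum.inr (j, i) =>
        have hτ : spiderτ t k (Sum.inr (j, i)) = 1 := rfl
        rw [hτ] at h
        have hne : ((spider t k).neighborSet (Sum.inr (j, i)) ∩ Aset t k m).Nonempty := by
          rw [← Set.ncard_pos (Set.toFinite _)]; omega
        obtain ⟨w, hwadj, hwA⟩ := hne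
        rcases adj_inr_cases hwadj with ⟨hi0, rfl⟩ | ⟨i', hii', rfl⟩
        · exact Or.inr ⟨j, i, by omega, rfl⟩
        · rcases hwA with h' | ⟨j'', i'', hi'', heq⟩
          · exact absurd h' (by exact fun hc => inl_ne_inr hc.symm)
          · obtain ⟨hj2, hi2⟩ := inr_eq_inr heq
            subst hj2
            have : i'.1 = i''.1 := congrArg Fin.val hi2
            exact Or.inr ⟨j, i, by omega, rfl⟩
  · rintro (rfl | ⟨j, i, hi, rfl⟩)
    · exact subset_interval' (Or.inl rfl)
    · rcases Nat.lt_or_ge i.1 m with h' | h'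
      · exact subset_interval' (Or.inr ⟨j, i, h', rfl⟩)
      · -- i.1 = m
        rcases Nat.eq_zero_or_pos i.1 with h0 | h0
        · exact mem_interval_of_adj (adj_inr_inl.mpr h0) (Or.inl rfl) (le_refl _)
        · have hlt : i.1 - 1 < t := by omega
          refine mem_interval_of_adj (w := Sum.inr (j, ⟨i.1 - 1, hlt⟩))
            (adj_inr_inr.mpr ⟨rfl, Or.inr (by simp; omega)⟩)
            (Or.inr ⟨j, ⟨i.1 - 1, hlt⟩, by simp; omega, rfl⟩) (le_refl _)

lemma iter_A (m : ℕ) :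
    (interval (spider t k) (spiderτ t k))^[m] ({Sum.inl ()} : Set (SpiderV t k)) =
      Aset t k m := by
  induction m with
  | zero => exact Aset_zero.symm
  | succ m ih => rw [Function.iterate_succ_apply', ih, Aset_step]

lemma Aset_univ : Aset t k t = Set.univ := by
  ext x
  simp only [Set.mem_univ, iff_true]
  match x with
  | Sum.inl () => exact Or.inl rfl
  | Sum.inr (j, i) => exact Or.inr ⟨j, i, i.2, rfl⟩

lemma Aset_ne (ht : 0 < t) {m : ℕ} (hm : m < t) : Aset t k m ≠ Set.univ := by
  intro hc
  have hx : (Sum.inr (⟨0, by omega⟩, ⟨t - 1, by omega⟩) : SpiderV t k) ∈ Aset t k m := by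
    rw [hc]; trivial
  rcases hx with h | ⟨j, i, hi, heq⟩
  · exact inl_ne_inr h.symm
  · obtain ⟨_, hi2⟩ := inr_eq_inr heq
    have : (t - 1 : ℕ) = i.1 := congrArg Fin.val hi2
    omega

/-! ### The sets arising from the leaf configuration -/

/-- The set activated after `m` steps starting from the `k` far leaves. -/
def Bset (t k : ℕ) (j₀ : Fin (k + 1)) (m : ℕ) : Set (SpiderV t k) :=
  {x | (∃ j i, j ≠ j₀ ∧ t - 1 - m ≤ i.1 ∧ x = Sum.inr (j, i)) ∨
       (t ≤ m ∧ x = Sum.inl ()) ∨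
       (∃ i : Fin t, i.1 + t < m ∧ x = Sum.inr (j₀, i))}

lemma Bset_mono {j₀ : Fin (k + 1)} {m m' : ℕ} (h : m ≤ m') :
    Bset t k j₀ m ⊆ Bset t k j₀ m' := by
  rintro x (⟨j, i, hj, hi, rfl⟩ | ⟨hm, rfl⟩ | ⟨i, hi, rfl⟩)
  · exact Or.inl ⟨j, i, hj, by omega, rfl⟩
  · exact Or.inr (Or.inl ⟨by omega, rfl⟩)
  · exact Or.inr (Or.inr ⟨i, by omega, rfl⟩)

lemma Bset_zero (ht : 0 < t) (j₀ : Fin (k + 1)) :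
    Bset t k j₀ 0 =
      ({x | ∃ j : Fin (k + 1), j ≠ j₀ ∧
        x = Sum.inr (j, ⟨t - 1, Nat.sub_lt ht Nat.one_pos⟩)} : Set (SpiderV t k)) := by
  ext x
  constructor
  · rintro (⟨j, i, hj, hi, rfl⟩ | ⟨hm, rfl⟩ | ⟨i, hi, rfl⟩)
    · have h2 : i.1 ≤ t - 1 := by omega
      have h3 : i = ⟨t - 1, Nat.sub_lt ht Nat.one_pos⟩ := by
        apply Fin.ext; simp; omega
      exact ⟨j, hj, by rw [h3]⟩
    · omega
    · omega
  · rintro ⟨j, hj, rfl⟩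
    exact Or.inl ⟨j, ⟨t - 1, Nat.sub_lt ht Nat.one_pos⟩, hj, by simp, rfl⟩

lemma Bset_step (ht : 0 < t) (hk : 0 < k) (j₀ : Fin (k + 1)) (m : ℕ) :
    interval (spider t k) (spiderτ t k) (Bset t k j₀ m) = Bset t k j₀ (m + 1) := by
  ext x
  constructor
  · intro hx
    rcases mem_interval.mp hx with h | h
    · exact Bset_mono (by omega) h
    · match x with
      | Sum.inl u =>
        rcases le_or_gt t (m + 1) with hc | hc
        · exact Or.inr (Or.inl ⟨hc, rfl⟩)
        · -- contradiction: no neighbor of the root is in B m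
          exfalso
          have hτ : spiderτ t k (Sum.inl u) = k := rfl
          rw [hτ] at h
          have hempty : (spider t k).neighborSet (Sum.inl u) ∩ Bset t k j₀ m = ∅ := by
            ext w
            simp only [Set.mem_inter_iff, SimpleGraph.mem_neighborSet,
              Set.mem_empty_iff_false, iff_false, not_and]
            intro hadj hwB
            have hu : u = () := rfl
            rw [hu] at hadj
            obtain ⟨j, i, hi0, rfl⟩ := adj_root_cases hadj
            rcases hwB with ⟨j', i', hj', hi', heq⟩ | ⟨hm, heq⟩ | ⟨i', hi', heq⟩
            · obtain ⟨_, hi2⟩ := inr_eq_inr heq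
              have : i.1 = i'.1 := congrArg Fin.val hi2
              omega
            · exact inl_ne_inr heq.symm
            · obtain ⟨_, hi2⟩ := inr_eq_inr heq
              have : i.1 = i'.1 := congrArg Fin.val hi2
              omega
          rw [hempty, Set.ncard_empty] at h
          omega
      | Sum.inr (j, i) =>
        have hτ : spiderτ t k (Sum.inr (j, i)) = 1 := rfl
        rw [hτ] at h
        have hne : ((spider t k).neighborSet (Sum.inr (j, i)) ∩ Bset t k j₀ m).Nonempty := by
          rw [← Set.ncard_pos (Set.toFinite _)]; omega
        obtain ⟨w, hwadj, hwB⟩ := hne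
        rcases Decidable.em (j = j₀) with hjj | hjj
        · subst hjj
          -- show i.1 + t < m + 1
          refine Or.inr (Or.inr ⟨i, ?_, rfl⟩)
          by_contra hni
          push_neg at hni   -- m + 1 ≤ i.1 + t
          rcases adj_inr_cases hwadj with ⟨hi0, rfl⟩ | ⟨i', hii', rfl⟩
          · rcases hwB with ⟨j', i', hj', hi', heq⟩ | ⟨hm, heq⟩ | ⟨i', hi', heq⟩
            · exact inl_ne_inr heq
            · omega
            · exact inl_ne_inr heq
          · rcases hwB with ⟨j', i'', hj', hi', heq⟩ | ⟨hm, heq⟩ | ⟨i'', hi', heq⟩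
            · obtain ⟨hj2, _⟩ := inr_eq_inr heq
              exact hj' hj2.symm
            · exact inl_ne_inr heq.symm
            · obtain ⟨_, hi2⟩ := inr_eq_inr heq
              have : i'.1 = i''.1 := congrArg Fin.val hi2
              omega
        · -- show t - 1 - (m+1) ≤ i.1
          refine Or.inl ⟨j, i, hjj, ?_, rfl⟩
          by_contra hni
          push_neg at hni   -- i.1 < t - 1 - (m+1)
          rcases adj_inr_cases hwadj with ⟨hi0, rfl⟩ | ⟨i', hii', rfl⟩
          · rcases hwB with ⟨j', i', hj', hi', heq⟩ | ⟨hm, heq⟩ | ⟨i', hi', heq⟩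
            · exact inl_ne_inr heq
            · omega
            · exact inl_ne_inr heq
          · rcases hwB with ⟨j', i'', hj', hi', heq⟩ | ⟨hm, heq⟩ | ⟨i'', hi', heq⟩
            · obtain ⟨_, hi2⟩ := inr_eq_inr heq
              have : i'.1 = i''.1 := congrArg Fin.val hi2
              omega
            · exact inl_ne_inr heq.symm
            · obtain ⟨hj2, _⟩ := inr_eq_inr heq
              exact hjj hj2
  · rintro (⟨j, i, hj, hi, rfl⟩ | ⟨hm, rfl⟩ | ⟨i, hi, rfl⟩)
    · rcases le_or_gt (t - 1 - m) i.1 with h' | h'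
      · exact subset_interval' (Or.inl ⟨j, i, hj, h', rfl⟩)
      · -- i.1 + 1 = t - 1 - m, use neighbor above
        have hlt : i.1 + 1 < t := by omega
        refine mem_interval_of_adj (w := Sum.inr (j, ⟨i.1 + 1, hlt⟩))
          (adj_inr_inr.mpr ⟨rfl, Or.inl (by simp)⟩)
          (Or.inl ⟨j, ⟨i.1 + 1, hlt⟩, hj, by simp; omega, rfl⟩) (le_refl _)
    · rcases le_or_gt t m with h' | h'
      · exact subset_interval' (Or.inr (Or.inl ⟨h', rfl⟩))
      · -- m = t - 1 : root activates now
        have hmt : m = t - 1 := by omega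
        refine Or.inr ?_
        show spiderτ t k (Sum.inl ()) ≤ _
        rw [show spiderτ t k (Sum.inl ()) = k from rfl]
        have hsub : ({x | ∃ j : Fin (k + 1), j ≠ j₀ ∧
            x = Sum.inr (j, (⟨0, ht⟩ : Fin t))} : Set (SpiderV t k)) ⊆
            (spider t k).neighborSet (Sum.inl ()) ∩ Bset t k j₀ m := by
          rintro x ⟨j, hj, rfl⟩
          refine ⟨adj_inl_inr.mpr rfl, Or.inl ⟨j, ⟨0, ht⟩, hj, by simp; omega, rfl⟩⟩
        calc k = ({x | ∃ j : Fin (k + 1), j ≠ j₀ ∧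
              x = Sum.inr (j, (⟨0, ht⟩ : Fin t))} : Set (SpiderV t k)).ncard :=
            (ncard_leaves j₀ ⟨0, ht⟩).symm
          _ ≤ _ := Set.ncard_le_ncard hsub (Set.toFinite _)
    · rcases Nat.lt_or_ge (i.1 + t) m with h' | h'
      · exact subset_interval' (Or.inr (Or.inr ⟨i, h', rfl⟩))
      · -- m = i.1 + t
        have hmi : m = i.1 + t := by omega
        rcases Nat.eq_zero_or_pos i.1 with h0 | h0
        · exact mem_interval_of_adj (adj_inr_inl.mpr h0)
            (Or.inr (Or.inl ⟨by omega, rfl⟩)) (le_refl _)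
        · have hlt : i.1 - 1 < t := by omega
          refine mem_interval_of_adj (w := Sum.inr (j₀, ⟨i.1 - 1, hlt⟩))
            (adj_inr_inr.mpr ⟨rfl, Or.inr (by simp; omega)⟩)
            (Or.inr (Or.inr ⟨⟨i.1 - 1, hlt⟩, by simp; omega, rfl⟩)) (le_refl _)

lemma iter_B (ht : 0 < t) (hk : 0 < k) (j₀ : Fin (k + 1)) (m : ℕ) :
    (interval (spider t k) (spiderτ t k))^[m]
      ({x | ∃ j : Fin (k + 1), j ≠ j₀ ∧
        x = Sum.inr (j, ⟨t - 1, Nat.sub_lt ht Nat.one_pos⟩)} : Set (SpiderV t k)) =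
      Bset t k j₀ m := by
  induction m with
  | zero => exact (Bset_zero ht j₀).symm
  | succ m ih => rw [Function.iterate_succ_apply', ih, Bset_step ht hk]

lemma Bset_univ (ht : 0 < t) (j₀ : Fin (k + 1)) : Bset t k j₀ (2 * t) = Set.univ := by
  ext x
  simp only [Set.mem_univ, iff_true]
  match x with
  | Sum.inl () => exact Or.inr (Or.inl ⟨by omega, rfl⟩)
  | Sum.inr (j, i) =>
    rcases Decidable.em (j = j₀) with hjj | hjj
    · subst hjj
      exact Or.inr (Or.inr ⟨i, by have := i.2; omega, rfl⟩)
    · exact Or.inl ⟨j, i, hjj, by omega, rfl⟩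

lemma Bset_ne (ht : 0 < t) (j₀ : Fin (k + 1)) {m : ℕ} (hm : m < 2 * t) :
    Bset t k j₀ m ≠ Set.univ := by
  intro hc
  have hx : (Sum.inr (j₀, ⟨t - 1, Nat.sub_lt ht Nat.one_pos⟩) : SpiderV t k) ∈
      Bset t k j₀ m := by rw [hc]; trivial
  rcases hx with ⟨j, i, hj, hi, heq⟩ | ⟨_, heq⟩ | ⟨i, hi, heq⟩
  · obtain ⟨hj2, _⟩ := inr_eq_inr heq
    exact hj hj2.symm
  · exact inl_ne_inr heq.symm
  · obtain ⟨_, hi2⟩ := inr_eq_inr heq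
    have : (t - 1 : ℕ) = i.1 := congrArg Fin.val hi2
    omega

/-! ### Minimality: the invariant path sets -/

/-- The vertex set of path `j`. -/
def Pset (t k : ℕ) (j : Fin (k + 1)) : Set (SpiderV t k) :=
  {x | ∃ i : Fin t, x = Sum.inr (j, i)}

lemma Pset_invariant (ht : 0 < t) (hk : 1 < k) (j : Fin (k + 1)) {S : Set (SpiderV t k)}
    (hS : S ⊆ Pset t k j) :
    interval (spider t k) (spiderτ t k) S ⊆ Pset t k j := by
  intro x hx
  rcases mem_interval.mp hx with h | h
  · exact hS h
  · match x with
    | Sum.inl u =>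
      exfalso
      have hτ : spiderτ t k (Sum.inl u) = k := rfl
      rw [hτ] at h
      have hsub : (spider t k).neighborSet (Sum.inl u) ∩ S ⊆
          {(Sum.inr (j, ⟨0, ht⟩) : SpiderV t k)} := by
        rintro w ⟨hadj, hwS⟩
        have hu : u = () := rfl
        rw [hu] at hadj
        obtain ⟨j', i', hi0, rfl⟩ := adj_root_cases hadj
        obtain ⟨i'', heq⟩ := hS hwS
        obtain ⟨hj2, hi2⟩ := inr_eq_inr heq
        subst hj2
        have h3 : i' = (⟨0, ht⟩ : Fin t) := Fin.ext hi0
        rw [h3]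
        rfl
      have := Set.ncard_le_ncard hsub (Set.toFinite _)
      erw [Set.ncard_singleton] at this
      omega
    | Sum.inr (j', i) =>
      rcases Decidable.em (j' = j) with hjj | hjj
      · exact ⟨i, by rw [hjj]⟩
      · exfalso
        have hτ : spiderτ t k (Sum.inr (j', i)) = 1 := rfl
        rw [hτ] at h
        have hempty : (spider t k).neighborSet (Sum.inr (j', i)) ∩ S = ∅ := by
          ext w
          simp only [Set.mem_inter_iff, SimpleGraph.mem_neighborSet,
            Set.mem_empty_iff_false, iff_false, not_and]
          intro hadj hwS
          obtain ⟨iw, heqw⟩ := hS hwS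
          rcases adj_inr_cases hadj with ⟨_, rfl⟩ | ⟨i', _, rfl⟩
          · exact inl_ne_inr heqw
          · obtain ⟨hj2, _⟩ := inr_eq_inr heqw
            exact hjj hj2
        rw [hempty, Set.ncard_empty] at h
        omega

lemma interval_empty (hk : 0 < k) :
    interval (spider t k) (spiderτ t k) (∅ : Set (SpiderV t k)) = ∅ := by
  ext x
  simp only [Set.mem_empty_iff_false, iff_false]
  intro hx
  rcases mem_interval.mp hx with h | h
  · exact h
  · rw [Set.inter_empty, Set.ncard_empty] at h
    match x with
    | Sum.inl u => exact absurd h (by rw [show spiderτ t k (Sum.inl u) = k from rfl]; omega)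
    | Sum.inr p => exact absurd h (by rw [show spiderτ t k (Sum.inr p) = 1 from rfl]; omega)

end Spider

open Spider in
/-- {root} is the unique minimum target set of the spider, with
activation time t; and the far-end leaves of any k of the k+1 paths form a
target set with activation time 2t; in particular t_τ(T) ≥ 2t. -/
theorem stmt14 (t k : ℕ) (ht : 0 < t) (hk : 1 < k) :
    TSS.IsTargetSet (spider t k) (spiderτ t k) ({Sum.inl ()} : Set (SpiderV t k)) ∧
    (∀ S : Set (SpiderV t k), TSS.IsTargetSet (spider t k) (spiderτ t k) S →
      S = {Sum.inl ()} ∨ 2 ≤ S.ncard) ∧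
    TSS.actTime (spider t k) (spiderτ t k) ({Sum.inl ()} : Set (SpiderV t k)) = t ∧
    ∀ j₀ : Fin (k + 1),
      TSS.IsTargetSet (spider t k) (spiderτ t k)
        ({x | ∃ j : Fin (k + 1), j ≠ j₀ ∧
          x = Sum.inr (j, ⟨t - 1, Nat.sub_lt ht Nat.one_pos⟩)} : Set (SpiderV t k)) ∧
      TSS.actTime (spider t k) (spiderτ t k)
        ({x | ∃ j : Fin (k + 1), j ≠ j₀ ∧
          x = Sum.inr (j, ⟨t - 1, Nat.sub_lt ht Nat.one_pos⟩)} : Set (SpiderV t k)) = 2 * t ∧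
      2 * t ≤ TSS.maxTime (spider t k) (spiderτ t k) := by
  have hk0 : 0 < k := by omega
  refine ⟨⟨t, by rw [iter_A, Aset_univ]⟩, ?_, ?_, ?_⟩
  · -- minimality
    intro S hS
    rcases Nat.lt_or_ge S.ncard 2 with h2 | h2
    · left
      interval_cases h : S.ncard
      · -- empty
        exfalso
        have hSe : S = ∅ := (Set.ncard_eq_zero (Set.toFinite _)).mp h
        obtain ⟨n, hn⟩ := hS
        have hiter : ∀ m : ℕ, (interval (spider t k) (spiderτ t k))^[m] S = ∅ := by
          intro m
          induction m with
          | zero => exact hSe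
          | succ m ih => rw [Function.iterate_succ_apply', ih, interval_empty hk0]
        rw [hiter n] at hn
        have : (Sum.inl () : SpiderV t k) ∈ (∅ : Set (SpiderV t k)) := by
          rw [hn]; trivial
        exact this
      · -- singleton
        obtain ⟨a, rfl⟩ := Set.ncard_eq_one.mp h
        match a with
        | Sum.inl () => rfl
        | Sum.inr (j, i) =>
          exfalso
          obtain ⟨n, hn⟩ := hS
          have hiter : ∀ m : ℕ,
              (interval (spider t k) (spiderτ t k))^[m] ({Sum.inr (j, i)} : Set (SpiderV t k)) ⊆
                Pset t k j := by
            intro m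
            induction m with
            | zero =>
              intro x hx
              exact ⟨i, hx⟩
            | succ m ih =>
              rw [Function.iterate_succ_apply']
              exact Pset_invariant ht hk j ih
          have hroot : (Sum.inl () : SpiderV t k) ∈ Pset t k j := by
            apply hiter n
            erw [hn]; trivial
          obtain ⟨i', heq⟩ := hroot
          exact inl_ne_inr heq
    · exact Or.inr h2
  · -- actTime of root = t
    refine actTime_eq (by rw [iter_A, Aset_univ]) ?_
    intro m hm
    rw [iter_A]
    exact Aset_ne ht hm
  · intro j₀
    have hTS : TSS.IsTargetSet (spider t k) (spiderτ t k)
        ({x | ∃ j : Fin (k + 1), j ≠ j₀ ∧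
          x = Sum.inr (j, ⟨t - 1, Nat.sub_lt ht Nat.one_pos⟩)} : Set (SpiderV t k)) :=
      ⟨2 * t, by rw [iter_B ht hk0, Bset_univ ht]⟩
    have hact : TSS.actTime (spider t k) (spiderτ t k)
        ({x | ∃ j : Fin (k + 1), j ≠ j₀ ∧
          x = Sum.inr (j, ⟨t - 1, Nat.sub_lt ht Nat.one_pos⟩)} : Set (SpiderV t k)) = 2 * t := by
      refine actTime_eq (by rw [iter_B ht hk0, Bset_univ ht]) ?_
      intro m hm
      rw [iter_B ht hk0]
      exact Bset_ne ht j₀ hm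
    refine ⟨hTS, hact, ?_⟩
    have hmem : 2 * t ∈ {m : ℕ | ∃ S : Set (SpiderV t k),
        TSS.IsTargetSet (spider t k) (spiderτ t k) S ∧
          TSS.actTime (spider t k) (spiderτ t k) S = m} := ⟨_, hTS, hact⟩
    have hbdd : BddAbove {m : ℕ | ∃ S : Set (SpiderV t k),
        TSS.IsTargetSet (spider t k) (spiderτ t k) S ∧
          TSS.actTime (spider t k) (spiderτ t k) S = m} := by
      refine ⟨Nat.card (SpiderV t k), ?_⟩
      rintro m ⟨S, _, rfl⟩
      exact actTime_le_card
    exact le_csSup hbdd hmem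
end

section
/- The difference between the size of a target set achieving the maximum activation time and the size of a minimum target set can be arbitrarily large: for every integer k > 1 there exists a tree T with threshold function τ whose unique minimum target set has size 1, but every target set S₀ with t_τ(S₀) = t_τ(T) has size at least k. -/
open TSS
open Set

def starG (k : ℕ) : SimpleGraph (Fin (k+2)) where
  Adj x y := x ≠ y ∧ (x = 0 ∨ y = 0)
  symm := ⟨fun _ _ ⟨h1, h2⟩ => ⟨h1.symm, h2.symm⟩⟩
  loopless := ⟨fun _ ⟨h, _⟩ => h rfl⟩

def thr (k : ℕ) : Fin (k+2) → ℕ := fun x => if x = 0 then k else 1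

variable {k : ℕ}

lemma adj_iff {x y : Fin (k+2)} : (starG k).Adj x y ↔ x ≠ y ∧ (x = 0 ∨ y = 0) := Iff.rfl

lemma nbr0 : (starG k).neighborSet 0 = {0}ᶜ := by
  ext y
  simp only [SimpleGraph.mem_neighborSet, adj_iff, mem_compl_iff, mem_singleton_iff]
  constructor
  · rintro ⟨h1, _⟩ rfl; exact h1 rfl
  · intro h; exact ⟨fun h' => h h'.symm, Or.inl trivial⟩

lemma nbrleaf {v : Fin (k+2)} (hv : v ≠ 0) : (starG k).neighborSet v = {0} := by
  ext y
  simp only [SimpleGraph.mem_neighborSet, adj_iff, mem_singleton_iff]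
  constructor
  · rintro ⟨h1, h2 | h2⟩
    · exact absurd h2 hv
    · exact h2
  · rintro rfl; exact ⟨hv, Or.inr rfl⟩

lemma mem_I_leaf {S : Set (Fin (k+2))} {v : Fin (k+2)} (hv : v ≠ 0) :
    v ∈ interval (starG k) (thr k) S ↔ v ∈ S ∨ 0 ∈ S := by
  rw [interval, Set.mem_union]
  simp only [Set.mem_setOf_eq, nbrleaf hv, thr, if_neg hv]
  constructor
  · rintro (h | h)
    · exact Or.inl h
    · right
      by_contra h0
      rw [Set.singleton_inter_eq_empty.mpr h0] at h
      simp at h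
  · rintro (h | h)
    · exact Or.inl h
    · right
      rw [Set.inter_eq_left.mpr (Set.singleton_subset_iff.mpr h)]
      simp
lemma mem_I_zero {S : Set (Fin (k+2))} :
    0 ∈ interval (starG k) (thr k) S ↔ 0 ∈ S ∨ k ≤ ({0}ᶜ ∩ S).ncard := by
  rw [interval, Set.mem_union]
  simp [nbr0, thr]

lemma I_of_zero_mem {S : Set (Fin (k+2))} (h : 0 ∈ S) :
    interval (starG k) (thr k) S = univ := by
  ext v
  simp only [mem_univ, iff_true]
  by_cases hv : v = 0
  · subst hv; exact Set.mem_union_left _ h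
  · exact (mem_I_leaf hv).mpr (Or.inr h)

lemma inter_compl {S : Set (Fin (k+2))} (h : 0 ∉ S) : {0}ᶜ ∩ S = S :=
  Set.inter_eq_right.mpr fun x hx (hx0 : x ∈ ({0} : Set _)) => h (hx0 ▸ hx)

lemma I_fix {S : Set (Fin (k+2))} (h0 : 0 ∉ S) (hc : S.ncard < k) :
    interval (starG k) (thr k) S = S := by
  ext v
  by_cases hv : v = 0
  · subst hv
    rw [mem_I_zero, inter_compl h0]
    simp [h0, not_le.mpr hc]
  · rw [mem_I_leaf hv]
    simp [h0]

lemma I_insert {S : Set (Fin (k+2))} (h0 : 0 ∉ S) (hc : k ≤ S.ncard) :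
    interval (starG k) (thr k) S = insert 0 S := by
  ext v
  by_cases hv : v = 0
  · subst hv
    rw [mem_I_zero, inter_compl h0]
    simp [hc]
  · rw [mem_I_leaf hv]
    simp [h0, hv]

lemma target_large {S : Set (Fin (k+2))} (hT : IsTargetSet (starG k) (thr k) S)
    (h0 : 0 ∉ S) : k ≤ S.ncard := by
  by_contra h
  push_neg at h
  obtain ⟨t, ht⟩ := hT
  have hfix : ∀ n, (interval (starG k) (thr k))^[n] S = S := by
    intro n
    induction n with
    | zero => rfl
    | succ n ih => rw [Function.iterate_succ_apply', ih, I_fix h0 h]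
  rw [hfix t] at ht
  exact h0 (ht ▸ Set.mem_univ 0)

lemma actTime_le_one {S : Set (Fin (k+2))} (h0 : 0 ∈ S) :
    actTime (starG k) (thr k) S ≤ 1 := by
  apply Nat.sInf_le
  simp only [Set.mem_setOf_eq]
  have h1 : (interval (starG k) (thr k))^[1] S = univ := by
    rw [Function.iterate_one]; exact I_of_zero_mem h0
  rw [Function.iterate_succ_apply', h1, I_of_zero_mem (Set.mem_univ 0)]

lemma actTime_le_two {S : Set (Fin (k+2))} (hT : IsTargetSet (starG k) (thr k) S) :
    actTime (starG k) (thr k) S ≤ 2 := by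
  by_cases h0 : 0 ∈ S
  · exact le_trans (actTime_le_one h0) one_le_two
  · have hc := target_large hT h0
    apply Nat.sInf_le
    simp only [Set.mem_setOf_eq]
    have h1 : (interval (starG k) (thr k))^[1] S = insert 0 S := by
      rw [Function.iterate_one]; exact I_insert h0 hc
    have h2 : (interval (starG k) (thr k))^[2] S = univ := by
      rw [show (interval (starG k) (thr k))^[2] S
            = interval (starG k) (thr k) ((interval (starG k) (thr k))^[1] S)
          from Function.iterate_succ_apply' _ 1 S, h1,
        I_of_zero_mem (Set.mem_insert 0 S)]
    rw [Function.iterate_succ_apply', h2, I_of_zero_mem (Set.mem_univ 0)]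

lemma fin_one_ne_zero : (1 : Fin (k+2)) ≠ 0 := by
  simp [Fin.ext_iff]

def Sstar (k : ℕ) : Set (Fin (k+2)) := ({0, 1} : Set (Fin (k+2)))ᶜ

lemma zero_not_mem_Sstar : (0 : Fin (k+2)) ∉ Sstar k := by simp [Sstar]

lemma one_not_mem_Sstar : (1 : Fin (k+2)) ∉ Sstar k := by simp [Sstar]

lemma ncard_Sstar : (Sstar k).ncard = k := by
  have h := Set.ncard_add_ncard_compl ({0, 1} : Set (Fin (k+2)))
  rw [Set.ncard_pair (fin_one_ne_zero (k := k)).symm] at h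
  simp only [Nat.card_eq_fintype_card, Fintype.card_fin] at h
  rw [Sstar]
  omega

lemma I1_Sstar : (interval (starG k) (thr k))^[1] (Sstar k) = insert 0 (Sstar k) := by
  rw [Function.iterate_one]
  exact I_insert zero_not_mem_Sstar (le_of_eq ncard_Sstar.symm)

lemma I2_Sstar : (interval (starG k) (thr k))^[2] (Sstar k) = univ := by
  rw [show (interval (starG k) (thr k))^[2] (Sstar k)
        = interval (starG k) (thr k) ((interval (starG k) (thr k))^[1] (Sstar k))
      from Function.iterate_succ_apply' _ 1 _, I1_Sstar,
    I_of_zero_mem (Set.mem_insert 0 _)]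

lemma target_Sstar : IsTargetSet (starG k) (thr k) (Sstar k) := ⟨2, I2_Sstar⟩

lemma actTime_Sstar : actTime (starG k) (thr k) (Sstar k) = 2 := by
  set F := {t : ℕ | (interval (starG k) (thr k))^[t + 1] (Sstar k)
      = (interval (starG k) (thr k))^[t] (Sstar k)} with hF
  have mem2 : 2 ∈ F := by
    simp only [hF, Set.mem_setOf_eq]
    rw [Function.iterate_succ_apply', I2_Sstar, I_of_zero_mem (Set.mem_univ 0)]
  have ne0 : 0 ∉ F := by
    simp only [hF, Set.mem_setOf_eq, Function.iterate_zero_apply]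
    intro h
    rw [I1_Sstar] at h
    exact zero_not_mem_Sstar (h ▸ Set.mem_insert 0 (Sstar k))
  have ne1 : 1 ∉ F := by
    simp only [hF, Set.mem_setOf_eq]
    intro h
    rw [show (interval (starG k) (thr k))^[1+1] (Sstar k)
          = (interval (starG k) (thr k))^[2] (Sstar k) from rfl, I2_Sstar, I1_Sstar] at h
    have : (1 : Fin (k+2)) ∈ insert 0 (Sstar k) := h ▸ Set.mem_univ 1
    rcases this with h' | h'
    · exact fin_one_ne_zero h'
    · exact one_not_mem_Sstar h'
  have hmem := Nat.sInf_mem ⟨2, mem2⟩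
  have hle := Nat.sInf_le mem2
  have h0 : sInf F ≠ 0 := fun h => ne0 (h ▸ hmem)
  have h1 : sInf F ≠ 1 := fun h => ne1 (h ▸ hmem)
  show sInf F = 2
  omega

lemma maxTime_eq : maxTime (starG k) (thr k) = 2 := by
  have hbdd : ∀ t ∈ {t : ℕ | ∃ S, IsTargetSet (starG k) (thr k) S
      ∧ actTime (starG k) (thr k) S = t}, t ≤ 2 := by
    rintro t ⟨S, hS, rfl⟩
    exact actTime_le_two hS
  have hmem : 2 ∈ {t : ℕ | ∃ S, IsTargetSet (starG k) (thr k) S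
      ∧ actTime (starG k) (thr k) S = t} := ⟨Sstar k, target_Sstar, actTime_Sstar⟩
  exact le_antisymm (csSup_le ⟨2, hmem⟩ hbdd) (le_csSup ⟨2, hbdd⟩ hmem)

lemma starG_connected : (starG k).Connected := by
  rw [SimpleGraph.connected_iff]
  refine ⟨fun u v => ?_, ⟨0⟩⟩
  have h0 : ∀ w : Fin (k+2), (starG k).Reachable w 0 := by
    intro w
    by_cases hw : w = 0
    · rw [hw]
    · exact SimpleGraph.Adj.reachable ⟨hw, Or.inr rfl⟩
  exact (h0 u).trans (h0 v).symm

lemma starG_acyclic : (starG k).IsAcyclic := by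
  intro v c hc
  have h3 := hc.three_le_length
  have hnd := hc.support_nodup
  by_cases hv : v = 0
  · subst hv
    cases c with
    | nil => simp at h3
    | cons h p =>
      rename_i u
      have hu : u ≠ 0 := fun h' => h.1 h'.symm
      cases p with
      | nil => exact hu rfl
      | cons h2 q =>
        rename_i w
        have hw : w = 0 := by
          rcases h2.2 with h' | h'
          · exact absurd h' hu
          · exact h'
        subst hw
        cases q with
        | nil => simp [SimpleGraph.Walk.length_cons] at h3
        | cons h4 r =>
          rename_i x
          have : (0 : Fin (k+2)) ∈ r.support := r.end_mem_support
          simp only [SimpleGraph.Walk.support_cons, List.tail_cons, List.nodup_cons] at hnd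
          exact hnd.2.1 this
  · cases c with
    | nil => simp at h3
    | cons h p =>
      rename_i u
      have hu : u = 0 := by
        rcases h.2 with h' | h'
        · exact absurd h' hv
        · exact h'
      subst hu
      cases p with
      | nil => exact hv rfl
      | cons h2 q =>
        rename_i w
        have hw : w ≠ 0 := fun h' => h2.1 h'.symm
        cases q with
        | nil => simp [SimpleGraph.Walk.length_cons] at h3
        | cons h4 r =>
          rename_i x
          have hx : x = 0 := by
            rcases h4.2 with h' | h'
            · exact absurd h' hw
            · exact h'
          subst hx
          have : (0 : Fin (k+2)) ∈ r.support := r.start_mem_support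
          simp only [SimpleGraph.Walk.support_cons, List.tail_cons, List.nodup_cons] at hnd
          exact hnd.1 (List.mem_cons_of_mem _ this)

lemma starG_isTree : (starG k).IsTree := ⟨starG_connected, starG_acyclic⟩

lemma ncard_compl0 : (({0} : Set (Fin (k+2)))ᶜ).ncard = k + 1 := by
  have h := Set.ncard_add_ncard_compl ({0} : Set (Fin (k+2)))
  rw [Set.ncard_singleton] at h
  simp only [Nat.card_eq_fintype_card, Fintype.card_fin] at h
  omega

/-- for every k > 1 there is a tree with a threshold function whose
unique minimum target set has size 1, but every target set achieving the maximum
activation time has size at least k. -/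
theorem stmt15 (k : ℕ) (hk : 1 < k) :
    ∃ (n : ℕ) (G : SimpleGraph (Fin n)) (τ : Fin n → ℕ),
      G.IsTree ∧
      (∀ x : Fin n, 1 ≤ τ x ∧ τ x ≤ (G.neighborSet x).ncard) ∧
      (∃ r : Fin n, TSS.IsTargetSet G τ {r} ∧
        ∀ S : Set (Fin n), TSS.IsTargetSet G τ S → S = {r} ∨ 2 ≤ S.ncard) ∧
      (∀ S₀ : Set (Fin n), TSS.IsTargetSet G τ S₀ →
        TSS.actTime G τ S₀ = TSS.maxTime G τ → k ≤ S₀.ncard) := by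
  refine ⟨k + 2, starG k, thr k, starG_isTree, ?_, ⟨0, ?_, ?_⟩, ?_⟩
  · intro x
    by_cases hx : x = 0
    · subst hx
      rw [nbr0, ncard_compl0]
      have hthr : thr k 0 = k := if_pos rfl
      rw [hthr]
      omega
    · rw [nbrleaf hx]
      simp only [thr, if_neg hx, Set.ncard_singleton]
      exact ⟨le_refl 1, le_refl 1⟩
  · exact ⟨1, by rw [Function.iterate_one]; exact I_of_zero_mem rfl⟩
  · intro S hS
    by_cases h0 : 0 ∈ S
    · by_cases hS0 : S = {0}
      · exact Or.inl hS0
      · right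
        have hex : ∃ x ∈ S, x ≠ 0 := by
          by_contra h
          push_neg at h
          exact hS0 (Set.eq_singleton_iff_unique_mem.mpr ⟨h0, h⟩)
        obtain ⟨x, hx, hx0⟩ := hex
        have := (Set.one_lt_ncard_iff S.toFinite).mpr ⟨x, 0, hx, h0, hx0⟩
        omega
    · have := target_large hS h0
      omega
  · intro S₀ hT heq
    rw [maxTime_eq] at heq
    by_cases h0 : 0 ∈ S₀
    · have := actTime_le_one h0
      omega
    · exact target_large hT h0
end
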